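/- arXiv:1511.02402 — 10 statements merged into one kernel-verified Lean document; each statement's English description precedes it below -/
import Mathlib

section
/- Let d be a symmetric nonnegative function on a finite set U satisfying the α-relaxed triangle inequality d(u,v) ≤ α(d(v,w) + d(w,u)) for all u,v,w, with α ≥ 1. For any two disjoint finite subsets X, Y of U, define d(X) = Σ_{{u,v}⊆X} d(u,v) and d(X,Y) = Σ_{u∈X, v∈Y} d(u,v). Then α(|X|−1)·d(X,Y) ≥ |Y|·d(X). -/
open Finset

noncomputable def dSet {U : Type*} (d : U → U → ℝ) (X : Finset U) : ℝ :=
  (∑ u ∈ X, ∑ v ∈ X, d u v) / 2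

noncomputable def dCross {U : Type*} (d : U → U → ℝ) (X Y : Finset U) : ℝ :=
  ∑ u ∈ X, ∑ v ∈ Y, d u v

theorem stmt0 {U : Type*} [DecidableEq U] (d : U → U → ℝ) (α : ℝ) (hα : 1 ≤ α)
    (hnn : ∀ u v, 0 ≤ d u v) (hsymm : ∀ u v, d u v = d v u)
    (hself : ∀ u, d u u = 0)
    (htri : ∀ u v w, d u v ≤ α * (d v w + d w u))
    (X Y : Finset U) (hXY : Disjoint X Y) :
    α * ((X.card : ℝ) - 1) * dCross d X Y ≥ (Y.card : ℝ) * dSet d X := by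
  have key : ∑ u ∈ X, ∑ v ∈ X.erase u, ∑ w ∈ Y, d u v ≤
      α * ∑ u ∈ X, ∑ v ∈ X.erase u, ∑ w ∈ Y, (d v w + d w u) := by
    rw [Finset.mul_sum]
    refine Finset.sum_le_sum fun u hu => ?_
    rw [Finset.mul_sum]
    refine Finset.sum_le_sum fun v hv => ?_
    rw [Finset.mul_sum]
    exact Finset.sum_le_sum fun w hw => htri u v w
  have hL : ∑ u ∈ X, ∑ v ∈ X.erase u, ∑ w ∈ Y, d u v
      = (Y.card : ℝ) * (2 * dSet d X) := by
    have h1 : ∀ u ∈ X, ∑ v ∈ X.erase u, ∑ w ∈ Y, d u v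
        = (Y.card : ℝ) * ∑ v ∈ X, d u v := by
      intro u hu
      rw [Finset.sum_erase _ (by simp [hself u]), Finset.mul_sum]
      exact Finset.sum_congr rfl fun v hv => by
        simp [Finset.sum_const, nsmul_eq_mul]
    rw [Finset.sum_congr rfl h1, ← Finset.mul_sum, dSet]
    ring
  have hR : ∑ u ∈ X, ∑ v ∈ X.erase u, ∑ w ∈ Y, (d v w + d w u)
      = 2 * ((X.card : ℝ) - 1) * dCross d X Y := by
    have h2 : ∀ u ∈ X, ∑ v ∈ X.erase u, ∑ w ∈ Y, (d v w + d w u)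
        = (dCross d X Y - ∑ w ∈ Y, d u w) + ((X.card : ℝ) - 1) * ∑ w ∈ Y, d u w := by
      intro u hu
      have : ∑ v ∈ X.erase u, ∑ w ∈ Y, (d v w + d w u)
          = ∑ v ∈ X.erase u, ((∑ w ∈ Y, d v w) + ∑ w ∈ Y, d w u) := by
        exact Finset.sum_congr rfl fun v hv => Finset.sum_add_distrib
      rw [this, Finset.sum_add_distrib]
      congr 1
      · rw [Finset.sum_erase_eq_sub hu]
        rfl
      · rw [Finset.sum_const, nsmul_eq_mul, Finset.card_erase_of_mem hu]
        have hx : (0 : ℕ) < X.card := Finset.card_pos.mpr ⟨u, hu⟩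
        rw [Nat.cast_sub hx, Nat.cast_one]
        congr 1
        exact Finset.sum_congr rfl fun w hw => hsymm w u
    rw [Finset.sum_congr rfl h2, Finset.sum_add_distrib, Finset.sum_sub_distrib,
      ← Finset.mul_sum]
    have : (∑ u ∈ X, ∑ w ∈ Y, d u w) = dCross d X Y := rfl
    rw [this, Finset.sum_const, nsmul_eq_mul]
    ring
  rw [hL, hR] at key
  nlinarith [key]
end

section
/- Let d be a symmetric nonnegative function on U satisfying the α-relaxed triangle inequality with α ≥ 1. Let B = {b_1,…,b_t} and C = {c_1,…,c_t} be disjoint subsets of U with t > 2 (all elements distinct). Then α·(d(B,C) − Σ_{i=1}^t d(b_i,c_i)) ≥ d(C), where d(C) = Σ_{{u,v}⊆C} d(u,v) and d(B,C) = Σ_{u∈B,v∈C} d(u,v). -/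
open Finset

lemma aux_sum {ι : Type*} [DecidableEq ι] (A : Finset ι) (g : ι → ℝ) :
    ∑ j ∈ A, ∑ k ∈ A \ {j}, g k = ((A.card : ℝ) - 1) * ∑ k ∈ A, g k := by
  have h : ∀ j ∈ A, ∑ k ∈ A \ {j}, g k = (∑ k ∈ A, g k) - g j := by
    intro j hj
    rw [Finset.sum_sdiff_eq_sub (Finset.singleton_subset_iff.mpr hj), Finset.sum_singleton]
  rw [Finset.sum_congr rfl h, Finset.sum_sub_distrib, Finset.sum_const, nsmul_eq_mul]
  ring

lemma sdiff_pair {ι : Type*} [DecidableEq ι] (s : Finset ι) (i j : ι) :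
    s \ {i, j} = (s \ {i}) \ {j} := by
  ext k; simp; tauto

theorem stmt2 {U : Type*} [DecidableEq U] (d : U → U → ℝ) (α : ℝ) (hα : 1 ≤ α)
    (hnn : ∀ u v, 0 ≤ d u v) (hsymm : ∀ u v, d u v = d v u)
    (hself : ∀ u, d u u = 0)
    (htri : ∀ u v w, d u v ≤ α * (d v w + d w u))
    (t : ℕ) (ht : 2 < t) (b c : Fin t → U)
    (hb : Function.Injective b) (hc : Function.Injective c)
    (hdisj : ∀ i j, b i ≠ c j) :
    α * (dCross d (Finset.image b Finset.univ) (Finset.image c Finset.univ)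
        - ∑ i, d (b i) (c i))
      ≥ dSet d (Finset.image c Finset.univ) := by
  classical
  set S2 : ℝ := ∑ i, ∑ j, d (c i) (c j) with hS2
  set Cr : ℝ := ∑ i, ∑ j, d (b i) (c j) with hCr
  set S : ℝ := ∑ i, d (b i) (c i) with hS
  have hSet : dSet d (Finset.image c Finset.univ) = S2 / 2 := by
    unfold dSet
    rw [Finset.sum_image (fun x _ y _ h => hc h)]
    congr 1
    exact Finset.sum_congr rfl fun i _ => Finset.sum_image (fun x _ y _ h => hc h)
  have hCross : dCross d (Finset.image b Finset.univ) (Finset.image c Finset.univ) = Cr := by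
    unfold dCross
    rw [Finset.sum_image (fun x _ y _ h => hb h)]
    exact Finset.sum_congr rfl fun i _ => Finset.sum_image (fun x _ y _ h => hc h)
  rw [hSet, hCross]
  have hAcard : ∀ i : Fin t, (((Finset.univ \ {i} : Finset (Fin t)).card : ℝ)) = (t : ℝ) - 1 := by
    intro i
    rw [Finset.card_sdiff_of_subset (Finset.subset_univ _), Finset.card_singleton, Finset.card_univ,
      Fintype.card_fin, Nat.cast_sub (by omega)]
    simp
  -- ordered-pairs-without-diagonal versions
  have hS2' : S2 = ∑ i, ∑ j ∈ Finset.univ \ {i}, d (c i) (c j) := by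
    rw [hS2]
    refine Finset.sum_congr rfl fun i _ => ?_
    rw [Finset.sum_sdiff_eq_sub (Finset.subset_univ _), Finset.sum_singleton, hself, sub_zero]
  have hCrS : ∀ F : Fin t → Fin t → ℝ, (∀ i k, F i k = d (b k) (c i)) →
      ∑ i, ∑ k ∈ Finset.univ \ {i}, F i k = Cr - S := by
    intro F hF
    have h1 : ∀ i : Fin t, ∑ k ∈ Finset.univ \ {i}, F i k
        = (∑ k, d (b k) (c i)) - d (b i) (c i) := by
      intro i
      simp only [hF]
      rw [Finset.sum_sdiff_eq_sub (Finset.subset_univ _), Finset.sum_singleton]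
    rw [Finset.sum_congr rfl fun i _ => h1 i, Finset.sum_sub_distrib, hS, hCr,
      Finset.sum_comm]
  have hcard : ∀ i j : Fin t, j ≠ i →
      ((Finset.univ \ ({i, j} : Finset (Fin t))).card : ℝ) = (t : ℝ) - 2 := by
    intro i j hij
    rw [Finset.card_sdiff_of_subset (Finset.subset_univ _), Finset.card_pair (Ne.symm hij),
      Finset.card_univ, Fintype.card_fin, Nat.cast_sub (by omega)]
    simp
  have ht2 : (0 : ℝ) < (t : ℝ) - 2 := by
    have : (2 : ℝ) < (t : ℝ) := by exact_mod_cast ht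
    linarith
  -- the two cross triple sums
  have hT1 : ∑ i, ∑ j ∈ Finset.univ \ {i}, ∑ k ∈ Finset.univ \ ({i, j} : Finset (Fin t)),
      d (b k) (c i) = ((t : ℝ) - 2) * (Cr - S) := by
    have h1 : ∀ i : Fin t, ∑ j ∈ Finset.univ \ {i},
        ∑ k ∈ Finset.univ \ ({i, j} : Finset (Fin t)), d (b k) (c i)
        = ((t : ℝ) - 2) * ∑ k ∈ Finset.univ \ {i}, d (b k) (c i) := by
      intro i
      have : ∀ j : Fin t, (Finset.univ \ ({i, j} : Finset (Fin t)))
          = (Finset.univ \ {i}) \ {j} := fun j => sdiff_pair _ _ _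
      simp only [this]
      rw [aux_sum, hAcard]
      ring_nf
    rw [Finset.sum_congr rfl fun i _ => h1 i, ← Finset.mul_sum,
      hCrS (fun i k => d (b k) (c i)) (fun _ _ => rfl)]
  have hT2 : ∑ i, ∑ j ∈ Finset.univ \ {i}, ∑ k ∈ Finset.univ \ ({i, j} : Finset (Fin t)),
      d (b k) (c j) = ((t : ℝ) - 2) * (Cr - S) := by
    have hswap : ∑ i, ∑ j ∈ Finset.univ \ {i},
        ∑ k ∈ Finset.univ \ ({i, j} : Finset (Fin t)), d (b k) (c j)
        = ∑ j, ∑ i ∈ Finset.univ \ {j},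
        ∑ k ∈ Finset.univ \ ({i, j} : Finset (Fin t)), d (b k) (c j) := by
      apply Finset.sum_comm'
      intro i j
      simp [ne_comm]
    rw [hswap]
    have h1 : ∀ j : Fin t, ∑ i ∈ Finset.univ \ {j},
        ∑ k ∈ Finset.univ \ ({i, j} : Finset (Fin t)), d (b k) (c j)
        = ((t : ℝ) - 2) * ∑ k ∈ Finset.univ \ {j}, d (b k) (c j) := by
      intro j
      have : ∀ i : Fin t, (Finset.univ \ ({i, j} : Finset (Fin t)))
          = (Finset.univ \ {j}) \ {i} := by
        intro i
        rw [Finset.pair_comm]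
        exact sdiff_pair _ _ _
      simp only [this]
      rw [aux_sum, hAcard]
      ring_nf
    rw [Finset.sum_congr rfl fun j _ => h1 j, ← Finset.mul_sum,
      hCrS (fun j k => d (b k) (c j)) (fun _ _ => rfl)]
  -- key triple-sum inequality
  have key : ((t : ℝ) - 2) * S2 ≤ ((t : ℝ) - 2) * (2 * α * (Cr - S)) := by
    have lhs_eq : ((t : ℝ) - 2) * S2
        = ∑ i, ∑ j ∈ Finset.univ \ {i}, ∑ _k ∈ Finset.univ \ ({i, j} : Finset (Fin t)),
            d (c i) (c j) := by
      rw [hS2', Finset.mul_sum]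
      refine Finset.sum_congr rfl fun i _ => ?_
      rw [Finset.mul_sum]
      refine Finset.sum_congr rfl fun j hj => ?_
      have hji : j ≠ i := by
        have := (Finset.mem_sdiff.mp hj).2
        simpa using this
      rw [Finset.sum_const, nsmul_eq_mul, hcard i j hji]
    have step : ∑ i, ∑ j ∈ Finset.univ \ {i},
        ∑ _k ∈ Finset.univ \ ({i, j} : Finset (Fin t)), d (c i) (c j)
        ≤ ∑ i, ∑ j ∈ Finset.univ \ {i},
        ∑ k ∈ Finset.univ \ ({i, j} : Finset (Fin t)),
          α * (d (b k) (c i) + d (b k) (c j)) := by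
      refine Finset.sum_le_sum fun i _ => Finset.sum_le_sum fun j _ =>
        Finset.sum_le_sum fun k _ => ?_
      have h := htri (c i) (c j) (b k)
      rw [hsymm (c j) (b k)] at h
      calc d (c i) (c j) ≤ α * (d (b k) (c j) + d (b k) (c i)) := h
        _ = α * (d (b k) (c i) + d (b k) (c j)) := by ring
    have rhs_eq : ∑ i, ∑ j ∈ Finset.univ \ {i},
        ∑ k ∈ Finset.univ \ ({i, j} : Finset (Fin t)),
          α * (d (b k) (c i) + d (b k) (c j))
        = α * ((∑ i, ∑ j ∈ Finset.univ \ {i}, ∑ k ∈ Finset.univ \ ({i, j} : Finset (Fin t)),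
            d (b k) (c i))
          + ∑ i, ∑ j ∈ Finset.univ \ {i}, ∑ k ∈ Finset.univ \ ({i, j} : Finset (Fin t)),
            d (b k) (c j)) := by
      simp only [Finset.mul_sum, ← Finset.sum_add_distrib]
      try exact Finset.sum_congr rfl fun i _ => Finset.sum_congr rfl fun j _ =>
        Finset.sum_congr rfl fun k _ => by ring
    rw [lhs_eq]
    calc _ ≤ _ := step
      _ = _ := rhs_eq
      _ = α * (((t : ℝ) - 2) * (Cr - S) + ((t : ℝ) - 2) * (Cr - S)) := by rw [hT1, hT2]
      _ = ((t : ℝ) - 2) * (2 * α * (Cr - S)) := by ring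
  have hfinal : S2 ≤ 2 * α * (Cr - S) := le_of_mul_le_mul_left key ht2
  rw [ge_iff_le]
  linarith
end

section
/- Let d be symmetric, nonnegative, satisfying the α-relaxed triangle inequality with α ≥ 1 on a finite set U. Let S be a finite subset containing B = {b_1,…,b_t}, with A = S \ B, and let C = {c_1,…,c_t} be disjoint from S, t > 2. Then Σ_{i=1}^t d(S − b_i + c_i) ≥ (t−2)·d(S) + (1/α)·d(A ∪ C), where d(X) denotes the sum of distances over unordered pairs of X. -/
open Finset

lemma double_insert {U : Type*} [DecidableEq U] (d : U → U → ℝ)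
    (hsymm : ∀ u v, d u v = d v u) (hself : ∀ u, d u u = 0)
    {x : U} {X : Finset U} (hx : x ∉ X) :
    ∑ u ∈ insert x X, ∑ v ∈ insert x X, d u v
      = (∑ u ∈ X, ∑ v ∈ X, d u v) + 2 * ∑ v ∈ X, d x v := by
  rw [Finset.sum_insert hx, Finset.sum_insert hx]
  have h1 : ∑ u ∈ X, ∑ v ∈ insert x X, d u v
      = (∑ u ∈ X, d u x) + ∑ u ∈ X, ∑ v ∈ X, d u v := by
    rw [← Finset.sum_add_distrib]
    exact Finset.sum_congr rfl fun u _ => Finset.sum_insert hx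
  rw [h1, hself]
  have h2 : ∑ u ∈ X, d u x = ∑ v ∈ X, d x v :=
    Finset.sum_congr rfl fun u _ => hsymm u x
  rw [h2]; ring

theorem stmt3 {U : Type*} [DecidableEq U] (d : U → U → ℝ) (α : ℝ) (hα : 1 ≤ α)
    (hnn : ∀ u v, 0 ≤ d u v) (hsymm : ∀ u v, d u v = d v u)
    (hself : ∀ u, d u u = 0)
    (htri : ∀ u v w, d u v ≤ α * (d v w + d w u))
    (S : Finset U) (t : ℕ) (ht : 2 < t) (b c : Fin t → U)
    (hb : Function.Injective b) (hc : Function.Injective c)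
    (hbS : ∀ i, b i ∈ S) (hcS : ∀ i, c i ∉ S) :
    ∑ i, dSet d (insert (c i) (S.erase (b i)))
      ≥ ((t : ℝ) - 2) * dSet d S
        + (1 / α) * dSet d ((S \ Finset.image b Finset.univ) ∪ Finset.image c Finset.univ) := by
  classical
  have hα0 : (0:ℝ) < α := lt_of_lt_of_le one_pos hα
  set B : Finset U := Finset.image b Finset.univ with hB
  set A : Finset U := S \ B with hAdef
  have hBS : B ⊆ S := by
    intro x hx
    rcases Finset.mem_image.1 hx with ⟨i, _, rfl⟩
    exact hbS i
  -- quantities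
  set fA : ℝ := ∑ u ∈ A, ∑ v ∈ A, d u v with hfA
  set PAB : ℝ := ∑ i, ∑ a ∈ A, d (b i) a with hPAB
  set PBB : ℝ := ∑ i, ∑ j, d (b i) (b j) with hPBB
  set PCA : ℝ := ∑ i, ∑ a ∈ A, d (c i) a with hPCA
  set PCB : ℝ := ∑ i, ∑ j, d (c i) (b j) with hPCB
  set PCC : ℝ := ∑ i, ∑ j, d (c i) (c j) with hPCC
  set K : ℝ := ∑ i, d (c i) (b i) with hK
  have sumB : ∀ g : U → ℝ, ∑ v ∈ B, g v = ∑ j, g (b j) := fun g => by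
    rw [hB, Finset.sum_image (fun i _ j _ h => hb h)]
  -- split sums over S
  have splitS : ∀ g : U → ℝ, ∑ v ∈ S, g v = (∑ a ∈ A, g a) + ∑ j, g (b j) := by
    intro g
    rw [← sumB g, hAdef]
    exact (Finset.sum_sdiff hBS).symm
  -- step 1 : per-swap identity
  have step1 : ∀ i, dSet d (insert (c i) (S.erase (b i)))
      = dSet d S - (∑ v ∈ S, d (b i) v) + (∑ v ∈ S, d (c i) v) - d (c i) (b i) := by
    intro i
    have hbT : b i ∉ S.erase (b i) := Finset.notMem_erase _ _
    have hcT : c i ∉ S.erase (b i) := fun h => hcS i (Finset.mem_of_mem_erase h)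
    have hS : insert (b i) (S.erase (b i)) = S := Finset.insert_erase (hbS i)
    have h1 : ∑ u ∈ S, ∑ v ∈ S, d u v
        = (∑ u ∈ S.erase (b i), ∑ v ∈ S.erase (b i), d u v)
          + 2 * ∑ v ∈ S.erase (b i), d (b i) v := by
      conv_lhs => rw [← hS]
      exact double_insert d hsymm hself hbT
    have h2 : ∑ v ∈ S.erase (b i), d (b i) v = ∑ v ∈ S, d (b i) v := by
      rw [Finset.sum_erase_eq_sub (hbS i), hself]; ring
    have h3 : ∑ v ∈ S.erase (b i), d (c i) v = (∑ v ∈ S, d (c i) v) - d (c i) (b i) :=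
      Finset.sum_erase_eq_sub (hbS i)
    unfold dSet
    rw [double_insert d hsymm hself hcT, h3]
    rw [h2] at h1
    rw [h1]; ring
  -- decomposition of dSet S
  have hdS : dSet d S = fA / 2 + PBB / 2 + PAB := by
    unfold dSet
    rw [splitS]
    have e1 : ∀ a : U, ∑ v ∈ S, d a v = (∑ x ∈ A, d a x) + ∑ j, d a (b j) :=
      fun a => splitS (d a)
    have e2 : ∑ a ∈ A, ∑ v ∈ S, d a v = fA + ∑ a ∈ A, ∑ j, d a (b j) := by
      rw [hfA, ← Finset.sum_add_distrib]
      exact Finset.sum_congr rfl fun a _ => e1 a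
    have e3 : ∑ j, ∑ v ∈ S, d (b j) v = PAB + PBB := by
      rw [hPAB, hPBB, ← Finset.sum_add_distrib]
      exact Finset.sum_congr rfl fun j _ => splitS (d (b j))
    have e4 : ∑ a ∈ A, ∑ j, d a (b j) = PAB := by
      rw [hPAB, Finset.sum_comm]
      exact Finset.sum_congr rfl fun j _ => Finset.sum_congr rfl fun a _ => hsymm a (b j)
    calc ((∑ a ∈ A, ∑ v ∈ S, d a v) + ∑ j, ∑ v ∈ S, d (b j) v) / 2
        = (fA + PAB + (PAB + PBB)) / 2 := by rw [e2, e4, e3]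
      _ = fA / 2 + PBB / 2 + PAB := by ring
  -- decomposition of dSet (A ∪ C)
  have hCA : ∀ x ∈ Finset.image c Finset.univ, x ∉ A := by
    intro x hx hxA
    rcases Finset.mem_image.1 hx with ⟨i, _, rfl⟩
    exact hcS i (Finset.mem_sdiff.1 hxA).1
  have hdisj : Disjoint A (Finset.image c Finset.univ) :=
    Finset.disjoint_right.2 hCA
  have sumC : ∀ g : U → ℝ, ∑ v ∈ Finset.image c Finset.univ, g v = ∑ j, g (c j) :=
    fun g => Finset.sum_image (fun i _ j _ h => hc h)
  have splitAC : ∀ g : U → ℝ, ∑ v ∈ A ∪ Finset.image c Finset.univ, g v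
      = (∑ a ∈ A, g a) + ∑ j, g (c j) := by
    intro g
    rw [Finset.sum_union hdisj, sumC]
  have hdAC : dSet d (A ∪ Finset.image c Finset.univ) = fA / 2 + PCC / 2 + PCA := by
    unfold dSet
    rw [splitAC]
    have e2 : ∑ a ∈ A, ∑ v ∈ A ∪ Finset.image c Finset.univ, d a v
        = fA + ∑ a ∈ A, ∑ j, d a (c j) := by
      rw [hfA, ← Finset.sum_add_distrib]
      exact Finset.sum_congr rfl fun a _ => splitAC (d a)
    have e3 : ∑ j, ∑ v ∈ A ∪ Finset.image c Finset.univ, d (c j) v = PCA + PCC := by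
      rw [hPCA, hPCC, ← Finset.sum_add_distrib]
      exact Finset.sum_congr rfl fun j _ => splitAC (d (c j))
    have e4 : ∑ a ∈ A, ∑ j, d a (c j) = PCA := by
      rw [hPCA, Finset.sum_comm]
      exact Finset.sum_congr rfl fun j _ => Finset.sum_congr rfl fun a _ => hsymm a (c j)
    calc ((∑ a ∈ A, ∑ v ∈ A ∪ Finset.image c Finset.univ, d a v)
          + ∑ j, ∑ v ∈ A ∪ Finset.image c Finset.univ, d (c j) v) / 2
        = (fA + PCA + (PCA + PCC)) / 2 := by rw [e2, e4, e3]
      _ = fA / 2 + PCC / 2 + PCA := by ring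
  -- total of swaps
  have hsum : ∑ i, dSet d (insert (c i) (S.erase (b i)))
      = (t : ℝ) * dSet d S - (PAB + PBB) + (PCA + PCB) - K := by
    have e0 : ∑ i, dSet d (insert (c i) (S.erase (b i)))
        = ∑ i : Fin t, (dSet d S - (∑ v ∈ S, d (b i) v) + (∑ v ∈ S, d (c i) v)
            - d (c i) (b i)) :=
      Finset.sum_congr rfl fun i _ => step1 i
    rw [e0]
    have e1 : ∑ i : Fin t, ∑ v ∈ S, d (b i) v = PAB + PBB := by
      rw [hPAB, hPBB, ← Finset.sum_add_distrib]
      exact Finset.sum_congr rfl fun i _ => splitS (d (b i))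
    have e2 : ∑ i : Fin t, ∑ v ∈ S, d (c i) v = PCA + PCB := by
      rw [hPCA, hPCB, ← Finset.sum_add_distrib]
      exact Finset.sum_congr rfl fun i _ => splitS (d (c i))
    rw [Finset.sum_sub_distrib, Finset.sum_add_distrib, Finset.sum_sub_distrib,
      Finset.sum_const, Finset.card_univ, Fintype.card_fin, nsmul_eq_mul, e1, e2, ← hK]
  -- the key triangle lemma
  have key : PCC ≤ α * (2 * PCB - 2 * K) := by
    have ht2 : (0:ℝ) < (t : ℝ) - 2 := by
      have : (2:ℝ) < (t:ℝ) := by exact_mod_cast ht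
      linarith
    have main : ((t:ℝ) - 2) * PCC ≤ ((t:ℝ) - 2) * (α * (2 * PCB - 2 * K)) := by
      set F : Fin t → Fin t → ℝ := fun i j =>
        α * (((∑ k, d (c i) (b k)) - d (c i) (b i) - d (c i) (b j))
          + ((∑ k, d (c j) (b k)) - d (c j) (b j) - d (c j) (b i))) with hF
      have perpair : ∀ i : Fin t, ∀ j ∈ Finset.univ.erase i,
          ((t:ℝ) - 2) * d (c i) (c j) ≤ F i j := by
        intro i j hj
        have hji : j ≠ i := Finset.ne_of_mem_erase hj
        have hcard : ((Finset.univ.erase i).erase j).card = t - 2 := by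
          rw [Finset.card_erase_of_mem (Finset.mem_erase.2 ⟨hji, Finset.mem_univ j⟩),
            Finset.card_erase_of_mem (Finset.mem_univ i), Finset.card_univ,
            Fintype.card_fin]
          omega
        have h1 : ((t:ℝ) - 2) * d (c i) (c j)
            = ∑ _k ∈ (Finset.univ.erase i).erase j, d (c i) (c j) := by
          rw [Finset.sum_const, hcard, nsmul_eq_mul]
          have : ((t - 2 : ℕ) : ℝ) = (t:ℝ) - 2 := by
            have : 2 ≤ t := le_of_lt ht
            push_cast [Nat.cast_sub this]; ring
          rw [this]
        have h2 : ∑ _k ∈ (Finset.univ.erase i).erase j, d (c i) (c j)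
            ≤ ∑ k ∈ (Finset.univ.erase i).erase j, α * (d (c i) (b k) + d (c j) (b k)) := by
          apply Finset.sum_le_sum
          intro k _
          have := htri (c i) (c j) (b k)
          calc d (c i) (c j) ≤ α * (d (c j) (b k) + d (b k) (c i)) := this
            _ = α * (d (c i) (b k) + d (c j) (b k)) := by rw [hsymm (b k) (c i)]; ring
        have h3 : ∑ k ∈ (Finset.univ.erase i).erase j, α * (d (c i) (b k) + d (c j) (b k))
            = F i j := by
          rw [hF, ← Finset.mul_sum]
          congr 1
          rw [Finset.sum_add_distrib]
          have e1 : ∑ k ∈ (Finset.univ.erase i).erase j, d (c i) (b k)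
              = (∑ k, d (c i) (b k)) - d (c i) (b i) - d (c i) (b j) := by
            rw [Finset.sum_erase_eq_sub (Finset.mem_erase.2 ⟨hji, Finset.mem_univ j⟩),
              Finset.sum_erase_eq_sub (Finset.mem_univ i)]
          have e2 : ∑ k ∈ (Finset.univ.erase i).erase j, d (c j) (b k)
              = (∑ k, d (c j) (b k)) - d (c j) (b j) - d (c j) (b i) := by
            rw [Finset.sum_erase_eq_sub (Finset.mem_erase.2 ⟨hji, Finset.mem_univ j⟩),
              Finset.sum_erase_eq_sub (Finset.mem_univ i)]
            ring
          rw [e1, e2]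
        calc ((t:ℝ) - 2) * d (c i) (c j)
            = ∑ _k ∈ (Finset.univ.erase i).erase j, d (c i) (c j) := h1
          _ ≤ ∑ k ∈ (Finset.univ.erase i).erase j, α * (d (c i) (b k) + d (c j) (b k)) := h2
          _ = F i j := h3
      -- rewrite LHS as sum over off-diagonal pairs
      have lhs_eq : ((t:ℝ) - 2) * PCC
          = ∑ i, ∑ j ∈ Finset.univ.erase i, ((t:ℝ) - 2) * d (c i) (c j) := by
        rw [hPCC, Finset.mul_sum]
        refine Finset.sum_congr rfl fun i _ => ?_
        rw [Finset.mul_sum]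
        refine (Finset.sum_erase (Finset.univ) ?_).symm
        rw [hself, mul_zero]
      have mid : ∑ i, ∑ j ∈ Finset.univ.erase i, ((t:ℝ) - 2) * d (c i) (c j)
          ≤ ∑ i, ∑ j ∈ Finset.univ.erase i, F i j :=
        Finset.sum_le_sum fun i _ => Finset.sum_le_sum fun j hj => perpair i j hj
      have rhs_eq : ∑ i, ∑ j ∈ Finset.univ.erase i, F i j
          = ((t:ℝ) - 2) * (α * (2 * PCB - 2 * K)) := by
        have e0 : ∀ i : Fin t, ∑ j ∈ Finset.univ.erase i, F i j
            = (∑ j, F i j) - F i i := fun i =>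
          Finset.sum_erase_eq_sub (Finset.mem_univ i)
        have swap : ∑ i : Fin t, ∑ j : Fin t, d (c j) (b i) = PCB := by
          rw [hPCB]; exact Finset.sum_comm
        have inner : ∀ i : Fin t, (∑ j, F i j) - F i i
            = α * (((t:ℝ) - 3) * (∑ k, d (c i) (b k)) + (4 - (t:ℝ)) * d (c i) (b i)
                + (PCB - K) - ∑ j, d (c j) (b i)) := by
          intro i
          have hj : ∑ j, (((∑ k, d (c i) (b k)) - d (c i) (b i) - d (c i) (b j))
              + ((∑ k, d (c j) (b k)) - d (c j) (b j) - d (c j) (b i)))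
              = (t:ℝ) * ((∑ k, d (c i) (b k)) - d (c i) (b i)) - (∑ j, d (c i) (b j))
                + (PCB - K) - ∑ j, d (c j) (b i) := by
            simp only [Finset.sum_add_distrib, Finset.sum_sub_distrib,
              Finset.sum_const, Finset.card_univ, Fintype.card_fin, nsmul_eq_mul,
              ← hPCB, ← hK]
            ring
          have hri : ∑ j, d (c i) (b j) = ∑ k, d (c i) (b k) := rfl
          simp only [hF]
          rw [← Finset.mul_sum, hj, hri]
          ring
        calc ∑ i, ∑ j ∈ Finset.univ.erase i, F i j
            = ∑ i : Fin t, ((∑ j, F i j) - F i i) :=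
              Finset.sum_congr rfl fun i _ => e0 i
          _ = ∑ i : Fin t, α * (((t:ℝ) - 3) * (∑ k, d (c i) (b k))
                + (4 - (t:ℝ)) * d (c i) (b i)
                + (PCB - K) - ∑ j, d (c j) (b i)) :=
              Finset.sum_congr rfl fun i _ => inner i
          _ = ((t:ℝ) - 2) * (α * (2 * PCB - 2 * K)) := by
              rw [← Finset.mul_sum]
              have hfin : ∑ i : Fin t, (((t:ℝ) - 3) * (∑ k, d (c i) (b k))
                  + (4 - (t:ℝ)) * d (c i) (b i)
                  + (PCB - K) - ∑ j, d (c j) (b i))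
                  = ((t:ℝ) - 3) * PCB + (4 - (t:ℝ)) * K + (t:ℝ) * (PCB - K) - PCB := by
                rw [Finset.sum_sub_distrib, Finset.sum_add_distrib, Finset.sum_add_distrib,
                  ← Finset.mul_sum, ← Finset.mul_sum, ← hPCB, ← hK, swap,
                  Finset.sum_const, Finset.card_univ, Fintype.card_fin, nsmul_eq_mul]
              rw [hfin]
              ring
      calc ((t:ℝ) - 2) * PCC
          = ∑ i, ∑ j ∈ Finset.univ.erase i, ((t:ℝ) - 2) * d (c i) (c j) := lhs_eq
        _ ≤ ∑ i, ∑ j ∈ Finset.univ.erase i, F i j := mid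
        _ = ((t:ℝ) - 2) * (α * (2 * PCB - 2 * K)) := rhs_eq
    exact le_of_mul_le_mul_left (by linarith [main]) ht2
  -- nonnegativity facts
  have hfA0 : 0 ≤ fA := Finset.sum_nonneg fun u _ => Finset.sum_nonneg fun v _ => hnn u v
  have hPAB0 : 0 ≤ PAB := Finset.sum_nonneg fun i _ => Finset.sum_nonneg fun a _ => hnn _ _
  have hPCA0 : 0 ≤ PCA := Finset.sum_nonneg fun i _ => Finset.sum_nonneg fun a _ => hnn _ _
  have hPCC0 : 0 ≤ PCC := Finset.sum_nonneg fun i _ => Finset.sum_nonneg fun j _ => hnn _ _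
  have hPCBK : 0 ≤ PCB - K := by nlinarith [key, hPCC0]
  -- scaled inequalities
  have hinva : 1 / α * fA ≤ fA := by
    have h1 : 1 / α ≤ 1 := by rw [div_le_one hα0]; exact hα
    nlinarith
  have hinvca : 1 / α * PCA ≤ PCA := by
    have h1 : 1 / α ≤ 1 := by rw [div_le_one hα0]; exact hα
    nlinarith
  have hinvcc : 1 / α * PCC ≤ 2 * PCB - 2 * K := by
    rw [div_mul_eq_mul_div, div_le_iff₀ hα0]
    calc 1 * PCC = PCC := one_mul _
      _ ≤ α * (2 * PCB - 2 * K) := key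
      _ = (2 * PCB - 2 * K) * α := mul_comm _ _
  rw [ge_iff_le, hsum, hdS, hdAC]
  nlinarith [hinva, hinvca, hinvcc, hfA0, hPAB0, hPCA0, hPCBK]
end

section
/- Let d be symmetric, nonnegative, satisfying the α-relaxed triangle inequality with α ≥ 1. Let S contain distinct elements b_1, b_2 and at least one further element z (so A = S \ {b_1,b_2} is nonempty), and let c_1, c_2 be two distinct elements not in S. Then d(S−b_1+c_1) + d(S−b_2+c_2) ≥ (1/α²)·d(A ∪ {c_1,c_2}). -/
open Finset

theorem dSet_insert' {U : Type*} [DecidableEq U] (d : U → U → ℝ)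
    (hsymm : ∀ u v, d u v = d v u) (hself : ∀ u, d u u = 0)
    {a : U} {X : Finset U} (ha : a ∉ X) :
    dSet d (insert a X) = (∑ v ∈ X, d a v) + dSet d X := by
  unfold dSet
  rw [Finset.sum_insert ha, Finset.sum_insert ha]
  have h1 : ∀ u ∈ X, ∑ v ∈ insert a X, d u v = d u a + ∑ v ∈ X, d u v :=
    fun u _ => Finset.sum_insert ha
  rw [Finset.sum_congr rfl h1, Finset.sum_add_distrib]
  have h2 : ∑ u ∈ X, d u a = ∑ u ∈ X, d a u :=
    Finset.sum_congr rfl (fun u _ => hsymm u a)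
  rw [h2, hself]
  ring

theorem stmt4 {U : Type*} [DecidableEq U] (d : U → U → ℝ) (α : ℝ) (hα : 1 ≤ α)
    (hnn : ∀ u v, 0 ≤ d u v) (hsymm : ∀ u v, d u v = d v u)
    (hself : ∀ u, d u u = 0)
    (htri : ∀ u v w, d u v ≤ α * (d v w + d w u))
    (S : Finset U) (b₁ b₂ c₁ c₂ : U) (hb : b₁ ≠ b₂) (hb₁ : b₁ ∈ S) (hb₂ : b₂ ∈ S)
    (hA : (S \ {b₁, b₂}).Nonempty)
    (hc : c₁ ≠ c₂) (hc₁ : c₁ ∉ S) (hc₂ : c₂ ∉ S) :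
    dSet d (insert c₁ (S.erase b₁)) + dSet d (insert c₂ (S.erase b₂))
      ≥ (1 / α ^ 2) * dSet d ((S \ {b₁, b₂}) ∪ {c₁, c₂}) := by
  set A := S \ {b₁, b₂} with hAdef
  obtain ⟨a₀, ha₀⟩ := hA
  have hASub : A ⊆ S := Finset.sdiff_subset
  have hc₁A : c₁ ∉ A := fun h => hc₁ (hASub h)
  have hc₂A : c₂ ∉ A := fun h => hc₂ (hASub h)
  have hb₁A : b₁ ∉ A := by simp [hAdef]
  have hb₂A : b₂ ∉ A := by simp [hAdef]
  have hc₁b₂ : c₁ ≠ b₂ := fun h => hc₁ (h ▸ hb₂)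
  have hc₂b₁ : c₂ ≠ b₁ := fun h => hc₂ (h ▸ hb₁)
  have hb₂e : b₂ ∈ S.erase b₁ := Finset.mem_erase.mpr ⟨Ne.symm hb, hb₂⟩
  have hb₁e : b₁ ∈ S.erase b₂ := Finset.mem_erase.mpr ⟨hb, hb₁⟩
  have hAe1 : A = (S.erase b₁).erase b₂ := by
    ext x; simp [hAdef, Finset.mem_sdiff, Finset.mem_erase]; tauto
  have hAe2 : A = (S.erase b₂).erase b₁ := by
    ext x; simp [hAdef, Finset.mem_sdiff, Finset.mem_erase]; tauto
  have e1 : S.erase b₁ = insert b₂ A := by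
    rw [hAe1]; exact (Finset.insert_erase hb₂e).symm
  have e2 : S.erase b₂ = insert b₁ A := by
    rw [hAe2]; exact (Finset.insert_erase hb₁e).symm
  have e3 : A ∪ ({c₁, c₂} : Finset U) = insert c₁ (insert c₂ A) := by
    ext x; simp [Finset.mem_union]
  have hc₁i : c₁ ∉ insert b₂ A := by simp [hc₁b₂, hc₁A]
  have hc₂i : c₂ ∉ insert b₁ A := by simp [hc₂b₁, hc₂A]
  have hc₁i2 : c₁ ∉ insert c₂ A := by simp [hc, hc₁A]
  rw [e1, e2, e3,
    dSet_insert' d hsymm hself hc₁i, dSet_insert' d hsymm hself hb₂A,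
    dSet_insert' d hsymm hself hc₂i, dSet_insert' d hsymm hself hb₁A,
    dSet_insert' d hsymm hself hc₁i2, dSet_insert' d hsymm hself hc₂A,
    Finset.sum_insert hb₂A, Finset.sum_insert hb₁A, Finset.sum_insert hc₂A]
  set dA := dSet d A with hdAdef
  have hdA : 0 ≤ dA := by
    rw [hdAdef]; unfold dSet
    apply div_nonneg _ (by norm_num)
    exact Finset.sum_nonneg fun u _ => Finset.sum_nonneg fun v _ => hnn u v
  have hC1 : 0 ≤ ∑ v ∈ A, d c₁ v := Finset.sum_nonneg fun v _ => hnn c₁ v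
  have hC2 : 0 ≤ ∑ v ∈ A, d c₂ v := Finset.sum_nonneg fun v _ => hnn c₂ v
  have hB1 : d b₁ a₀ ≤ ∑ v ∈ A, d b₁ v :=
    Finset.single_le_sum (fun i _ => hnn b₁ i) ha₀
  have hB2 : d b₂ a₀ ≤ ∑ v ∈ A, d b₂ v :=
    Finset.single_le_sum (fun i _ => hnn b₂ i) ha₀
  have hα2 : (1:ℝ) ≤ α ^ 2 := by nlinarith
  have hαpos : (0:ℝ) < α ^ 2 := by nlinarith
  have ht1 : d c₁ c₂ ≤ α * (d c₂ a₀ + d a₀ c₁) := htri c₁ c₂ a₀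
  have ht2 : d c₂ a₀ ≤ α * (d a₀ b₁ + d b₁ c₂) := htri c₂ a₀ b₁
  have ht3 : d a₀ c₁ ≤ α * (d c₁ b₂ + d b₂ a₀) := htri a₀ c₁ b₂
  have hαnn : (0:ℝ) ≤ α := le_trans zero_le_one hα
  have htr : d c₁ c₂ ≤ α ^ 2 * (d c₁ b₂ + d b₂ a₀ + d a₀ b₁ + d b₁ c₂) := by
    nlinarith [mul_le_mul_of_nonneg_left ht2 hαnn, mul_le_mul_of_nonneg_left ht3 hαnn]
  have hs1 : d a₀ b₁ = d b₁ a₀ := hsymm a₀ b₁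
  have hs2 : d b₁ c₂ = d c₂ b₁ := hsymm b₁ c₂
  rw [ge_iff_le, one_div, inv_mul_eq_div, div_le_iff₀ hαpos]
  have hnn1 : 0 ≤ d c₁ b₂ := hnn c₁ b₂
  have hnn2 : 0 ≤ d c₂ b₁ := hnn c₂ b₁
  nlinarith [mul_le_mul_of_nonneg_left hB1 (le_of_lt hαpos),
    mul_le_mul_of_nonneg_left hB2 (le_of_lt hαpos),
    mul_nonneg (sub_nonneg.mpr hα2) hC1,
    mul_nonneg (sub_nonneg.mpr hα2) hC2,
    mul_nonneg (sub_nonneg.mpr hα2) hdA,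
    mul_nonneg (sub_nonneg.mpr hα2) hnn1,
    mul_nonneg (sub_nonneg.mpr hα2) hnn2]
end

section
/- Let f be a monotone submodular function on subsets of U. Let S and O be sets of equal cardinality with A = S ∩ O, B = S \ A = {b_1,…,b_t}, C = O \ A = {c_1,…,c_t}, and let g be any bijection from B to C with c_i = g(b_i). Then Σ_{i=1}^t f((S \ {b_i}) ∪ {c_i}) ≥ (t−2)·f(S) + f(O). -/
open Finset

private lemma lemA {U : Type*} [DecidableEq U] (f : Finset U → ℝ)
    (hsub : ∀ X Y, f (X ∪ Y) + f (X ∩ Y) ≤ f X + f Y)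
    (S : Finset U) {t : ℕ} (c : Fin t → U) (hc : Function.Injective c)
    (hcS : ∀ i, c i ∉ S) :
    ∀ T : Finset (Fin t),
      f (S ∪ T.image c) + T.card * f S ≤ (∑ i ∈ T, f (insert (c i) S)) + f S := by
  intro T
  induction T using Finset.induction with
  | empty => simp
  | @insert a T ha ih =>
    have h1 : (S ∪ T.image c) ∪ insert (c a) S = S ∪ (insert a T).image c := by
      rw [Finset.image_insert]
      ext x
      simp only [Finset.mem_union, Finset.mem_insert]
      tauto
    have h2 : (S ∪ T.image c) ∩ insert (c a) S = S := by
      ext x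
      simp only [Finset.mem_inter, Finset.mem_union, Finset.mem_image, Finset.mem_insert]
      constructor
      · rintro ⟨h, h'⟩
        rcases h' with rfl | hx
        · rcases h with hx | ⟨i, hi, hix⟩
          · exact hx
          · have : i = a := hc hix
            exact (ha (this ▸ hi)).elim
        · exact hx
      · intro hx; exact ⟨Or.inl hx, Or.inr hx⟩
    have := hsub (S ∪ T.image c) (insert (c a) S)
    rw [h1, h2] at this
    rw [Finset.sum_insert ha, Finset.card_insert_of_notMem ha]
    push_cast
    linarith [ih]

private lemma lemB {U : Type*} [DecidableEq U] (f : Finset U → ℝ)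
    (hsub : ∀ X Y, f (X ∪ Y) + f (X ∩ Y) ≤ f X + f Y)
    (S : Finset U) {t : ℕ} (b : Fin t → U) (hb : Function.Injective b) :
    ∀ T : Finset (Fin t),
      f (S \ T.image b) + T.card * f S ≤ (∑ i ∈ T, f (S.erase (b i))) + f S := by
  intro T
  induction T using Finset.induction with
  | empty => simp
  | @insert a T ha ih =>
    have h1 : (S \ T.image b) ∪ S.erase (b a) = S := by
      ext x
      simp only [Finset.mem_union, Finset.mem_sdiff, Finset.mem_erase, Finset.mem_image]
      constructor
      · rintro (⟨hx, _⟩ | ⟨_, hx⟩) <;> exact hx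
      · intro hx
        by_cases hxa : x = b a
        · subst hxa
          refine Or.inl ⟨hx, ?_⟩
          rintro ⟨i, hi, hix⟩
          exact ha (hb hix ▸ hi)
        · exact Or.inr ⟨hxa, hx⟩
    have h2 : (S \ T.image b) ∩ S.erase (b a) = S \ (insert a T).image b := by
      ext x
      simp only [Finset.mem_inter, Finset.mem_sdiff, Finset.mem_erase, Finset.mem_image,
        Finset.mem_insert]
      constructor
      · rintro ⟨⟨hx, h⟩, hne, _⟩
        refine ⟨hx, ?_⟩
        rintro ⟨i, hi, hix⟩
        rcases hi with rfl | hi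
        · exact hne hix.symm
        · exact h ⟨i, hi, hix⟩
      · rintro ⟨hx, h⟩
        exact ⟨⟨hx, fun ⟨i, hi, hix⟩ => h ⟨i, Or.inr hi, hix⟩⟩,
          fun hxa => h ⟨a, Or.inl rfl, hxa.symm⟩, hx⟩
    have := hsub (S \ T.image b) (S.erase (b a))
    rw [h1, h2] at this
    rw [Finset.sum_insert ha, Finset.card_insert_of_notMem ha]
    push_cast
    linarith [ih]

theorem stmt7 {U : Type*} [DecidableEq U] (f : Finset U → ℝ)
    (hnn : ∀ X, 0 ≤ f X)
    (hmono : ∀ X Y, X ⊆ Y → f X ≤ f Y)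
    (hsub : ∀ X Y, f (X ∪ Y) + f (X ∩ Y) ≤ f X + f Y)
    (S O : Finset U) (hcard : S.card = O.card)
    (t : ℕ) (ht : 1 ≤ t) (b c : Fin t → U)
    (hb : Function.Injective b) (hc : Function.Injective c)
    (hB : Finset.image b Finset.univ = S \ O)
    (hC : Finset.image c Finset.univ = O \ S) :
    ∑ i, f (insert (c i) (S.erase (b i))) ≥ ((t : ℝ) - 2) * f S + f O := by
  have hcS : ∀ i, c i ∉ S := by
    intro i
    have : c i ∈ O \ S := hC ▸ Finset.mem_image_of_mem c (Finset.mem_univ i)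
    exact (Finset.mem_sdiff.mp this).2
  -- per-term bound
  have hterm : ∀ i, f (insert (c i) S) + f (S.erase (b i)) - f S
      ≤ f (insert (c i) (S.erase (b i))) := by
    intro i
    have h1 : insert (c i) (S.erase (b i)) ∪ S = insert (c i) S := by
      ext x
      simp only [Finset.mem_union, Finset.mem_insert, Finset.mem_erase]
      constructor
      · rintro ((rfl | ⟨_, hx⟩) | hx) <;> tauto
      · rintro (rfl | hx)
        · tauto
        · by_cases hxb : x = b i
          · exact Or.inr hx
          · exact Or.inl (Or.inr ⟨hxb, hx⟩)
    have h2 : insert (c i) (S.erase (b i)) ∩ S = S.erase (b i) := by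
      ext x
      simp only [Finset.mem_inter, Finset.mem_insert, Finset.mem_erase]
      constructor
      · rintro ⟨rfl | hx, hxS⟩
        · exact absurd hxS (hcS _)
        · exact hx
      · rintro ⟨hne, hx⟩; exact ⟨Or.inr ⟨hne, hx⟩, hx⟩
    have := hsub (insert (c i) (S.erase (b i))) S
    rw [h1, h2] at this
    linarith
  have hA := lemA f hsub S c hc hcS Finset.univ
  have hBB := lemB f hsub S b hb Finset.univ
  rw [hC] at hA
  rw [hB] at hBB
  have hO : f O ≤ f (S ∪ (O \ S)) := hmono _ _ (by intro x hx; by_cases h : x ∈ S <;> simp [h, hx])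
  have hSO : 0 ≤ f (S \ (S \ O)) := hnn _
  have hsum : ∑ i, (f (insert (c i) S) + f (S.erase (b i)) - f S)
      ≤ ∑ i, f (insert (c i) (S.erase (b i))) :=
    Finset.sum_le_sum fun i _ => hterm i
  have hcardt : (Finset.univ : Finset (Fin t)).card = t := by simp
  rw [hcardt] at hA hBB
  have hexp : ∑ i, (f (insert (c i) S) + f (S.erase (b i)) - f S)
      = (∑ i, f (insert (c i) S)) + (∑ i, f (S.erase (b i))) - t * f S := by
    rw [Finset.sum_sub_distrib, Finset.sum_add_distrib]
    simp [Finset.sum_const, hcardt]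
  linarith
end

section
/- Let d be symmetric nonnegative with the α-relaxed triangle inequality (α ≥ 1), f monotone submodular nonnegative, λ ≥ 0, and define φ(X) = f(X) + λ·d(X) where d(X) sums d over unordered pairs of X. Suppose S and O are finite sets of equal cardinality at least 3, with B = S \ O = {b_1,…,b_t}, C = O \ S = {c_1,…,c_t}, t ≥ 2 (when t = 2 assume S ∩ O ≠ ∅), and suppose φ(S) ≥ φ((S \ {b_i}) ∪ {c_i}) for every i. Then φ(S) ≥ (1/(2α²))·φ(O). -/
open Finset

set_option linter.unusedSectionVars false

section helpers
variable {U : Type*} [DecidableEq U] (d : U → U → ℝ)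

lemma my_dCross_nonneg (hnn : ∀ u v, 0 ≤ d u v) (X Y : Finset U) : 0 ≤ dCross d X Y :=
  Finset.sum_nonneg fun _ _ => Finset.sum_nonneg fun _ _ => hnn _ _

lemma my_dSet_nonneg (hnn : ∀ u v, 0 ≤ d u v) (X : Finset U) : 0 ≤ dSet d X :=
  div_nonneg (Finset.sum_nonneg fun _ _ => Finset.sum_nonneg fun _ _ => hnn _ _) (by norm_num)

lemma my_dCross_comm (hsymm : ∀ u v, d u v = d v u) (X Y : Finset U) :
    dCross d X Y = dCross d Y X := by
  unfold dCross
  rw [Finset.sum_comm]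
  exact Finset.sum_congr rfl fun u _ => Finset.sum_congr rfl fun v _ => hsymm v u

lemma my_dCross_union_right (X Y Z : Finset U) (h : Disjoint Y Z) :
    dCross d X (Y ∪ Z) = dCross d X Y + dCross d X Z := by
  unfold dCross
  rw [← Finset.sum_add_distrib]
  exact Finset.sum_congr rfl fun u _ => Finset.sum_union h

lemma my_dSet_union (hsymm : ∀ u v, d u v = d v u) (X Y : Finset U) (h : Disjoint X Y) :
    dSet d (X ∪ Y) = dSet d X + dSet d Y + dCross d X Y := by
  unfold dSet dCross
  rw [Finset.sum_union h]
  have h1 : ∀ u : U, ∑ v ∈ X ∪ Y, d u v = ∑ v ∈ X, d u v + ∑ v ∈ Y, d u v :=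
    fun u => Finset.sum_union h
  simp_rw [h1]
  rw [Finset.sum_add_distrib, Finset.sum_add_distrib]
  have h2 : ∑ u ∈ Y, ∑ v ∈ X, d u v = ∑ u ∈ X, ∑ v ∈ Y, d u v := by
    rw [Finset.sum_comm]
    exact Finset.sum_congr rfl fun u _ => Finset.sum_congr rfl fun v _ => hsymm v u
  rw [h2]; ring

lemma my_dSet_insert (hsymm : ∀ u v, d u v = d v u) (hself : ∀ u, d u u = 0)
    (a : U) (X : Finset U) (ha : a ∉ X) :
    dSet d (insert a X) = dSet d X + ∑ v ∈ X, d a v := by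
  have : insert a X = {a} ∪ X := rfl
  rw [this, my_dSet_union d hsymm _ _ (by simpa using ha)]
  have h1 : dSet d {a} = 0 := by simp [dSet, hself]
  have h2 : dCross d {a} X = ∑ v ∈ X, d a v := by simp [dCross]
  rw [h1, h2]; ring

lemma my_dSet_erase (hsymm : ∀ u v, d u v = d v u) (hself : ∀ u, d u u = 0)
    (a : U) (X : Finset U) (ha : a ∈ X) :
    dSet d X = dSet d (X.erase a) + ∑ v ∈ X, d a v := by
  have h0 : ∑ v ∈ X.erase a, d a v = ∑ v ∈ X, d a v := Finset.sum_erase _ (hself a)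
  conv_lhs => rw [← Finset.insert_erase ha]
  rw [my_dSet_insert d hsymm hself a _ (Finset.notMem_erase a X), h0]

lemma my_dSet_swap (hsymm : ∀ u v, d u v = d v u) (hself : ∀ u, d u u = 0)
    (x y : U) (S : Finset U) (hx : x ∈ S) (hy : y ∉ S) :
    dSet d (insert y (S.erase x)) =
      dSet d S - (∑ v ∈ S, d x v) + (∑ v ∈ S, d y v) - d y x := by
  have hy' : y ∉ S.erase x := fun h => hy (Finset.mem_of_mem_erase h)
  rw [my_dSet_insert d hsymm hself y _ hy']
  have h1 : dSet d (S.erase x) = dSet d S - ∑ v ∈ S, d x v := by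
    rw [my_dSet_erase d hsymm hself x S hx]; ring
  have h2 : ∑ v ∈ S.erase x, d y v = (∑ v ∈ S, d y v) - d y x :=
    Finset.sum_erase_eq_sub hx
  rw [h1, h2]; ring

end helpers


section sub
variable {U : Type*} [DecidableEq U] (f : Finset U → ℝ)

lemma my_telescopeA (hsub : ∀ X Y, f (X ∪ Y) + f (X ∩ Y) ≤ f X + f Y)
    (S : Finset U) :
    ∀ T : Finset U, Disjoint T S →
      f (S ∪ T) + (T.card : ℝ) * f S ≤ f S + ∑ x ∈ T, f (insert x S) := by
  intro T
  induction T using Finset.induction_on with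
  | empty => intro _; simp
  | @insert a T' ha ih =>
    intro hdisj
    have hdisj' : Disjoint T' S := by
      exact Finset.disjoint_of_subset_left (Finset.subset_insert a T') hdisj
    have haS : a ∉ S := Finset.disjoint_left.mp hdisj (Finset.mem_insert_self a T')
    have haT' : a ∉ S ∪ T' := by
      simp [haS, ha]
    have hu : (insert a S) ∪ (S ∪ T') = insert a (S ∪ T') := by
      ext x; simp only [Finset.mem_union, Finset.mem_insert]; tauto
    have hi : (insert a S) ∩ (S ∪ T') = S := by
      ext x
      simp only [Finset.mem_inter, Finset.mem_insert, Finset.mem_union]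
      constructor
      · rintro ⟨h1 | h1, h2 | h2⟩ <;> first | exact h2 | (exfalso; subst h1; tauto) | exact h1
      · intro h; tauto
    have hkey := hsub (insert a S) (S ∪ T')
    rw [hu, hi] at hkey
    have hstep : f (S ∪ insert a T') = f (insert a (S ∪ T')) := by
      rw [Finset.union_insert]
    have hih := ih hdisj'
    rw [Finset.sum_insert ha, Finset.card_insert_of_notMem ha]
    push_cast
    rw [hstep]
    linarith

lemma my_telescopeB (hsub : ∀ X Y, f (X ∪ Y) + f (X ∩ Y) ≤ f X + f Y)
    (S : Finset U) :
    ∀ T : Finset U, T ⊆ S →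
      (T.card : ℝ) * f S + f (S \ T) ≤ f S + ∑ x ∈ T, f (S.erase x) := by
  intro T
  induction T using Finset.induction_on with
  | empty => intro _; simp
  | @insert a T' ha ih =>
    intro hsub2
    have haS : a ∈ S := hsub2 (Finset.mem_insert_self a T')
    have hT'S : T' ⊆ S := fun x hx => hsub2 (Finset.mem_insert_of_mem hx)
    have haST' : a ∈ S \ T' := Finset.mem_sdiff.mpr ⟨haS, ha⟩
    have hu : (S.erase a) ∪ (S \ T') = S := by
      ext x
      simp only [Finset.mem_union, Finset.mem_erase, Finset.mem_sdiff]
      constructor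
      · rintro (⟨_, h⟩ | ⟨h, _⟩) <;> exact h
      · intro hx
        by_cases hxa : x = a
        · right; subst hxa; exact ⟨hx, ha⟩
        · left; exact ⟨hxa, hx⟩
    have hi : (S.erase a) ∩ (S \ T') = (S \ insert a T') := by
      ext x
      simp only [Finset.mem_inter, Finset.mem_erase, Finset.mem_sdiff, Finset.mem_insert]
      tauto
    have hkey := hsub (S.erase a) (S \ T')
    rw [hu, hi] at hkey
    have hih := ih hT'S
    rw [Finset.sum_insert ha, Finset.card_insert_of_notMem ha]
    push_cast
    linarith

end sub


lemma my_erase_sub {t : ℕ} (G : Fin t → Fin t → ℝ) :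
    ∑ i : Fin t, ∑ j ∈ univ.erase i, G i j
      = (∑ i : Fin t, ∑ j : Fin t, G i j) - ∑ i : Fin t, G i i := by
  rw [← Finset.sum_sub_distrib]
  exact Finset.sum_congr rfl fun i _ => Finset.sum_erase_eq_sub (Finset.mem_univ i)

lemma my_swap {t : ℕ} (F : Fin t → Fin t → ℝ) :
    ∑ i : Fin t, ∑ j ∈ univ.erase i, F i j = ∑ i : Fin t, ∑ j ∈ univ.erase i, F j i := by
  rw [my_erase_sub, my_erase_sub, Finset.sum_comm]

lemma my_eval {t : ℕ} (g : Fin t → Fin t → ℝ) :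
    ∑ i : Fin t, ∑ j ∈ univ.erase i, ∑ k ∈ univ \ {i, j}, g j k
      = ((t : ℝ) - 2) * ∑ j : Fin t, ∑ k ∈ univ.erase j, g j k := by
  have hmid : ∀ i : Fin t,
      ∑ j ∈ univ.erase i, ∑ k ∈ univ \ {i, j}, g j k
        = ∑ j ∈ univ.erase i, ((∑ k, g j k) - g j i - g j j) := by
    intro i
    refine Finset.sum_congr rfl fun j hj => ?_
    have hij : i ≠ j := (Finset.ne_of_mem_erase hj).symm
    rw [Finset.sum_sdiff_eq_sub (Finset.subset_univ _), Finset.sum_pair hij]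
    ring
  simp_rw [hmid]
  have h1 : ∑ i : Fin t, ∑ j ∈ univ.erase i, ((∑ k, g j k) - g j i - g j j)
      = (∑ i : Fin t, ∑ j : Fin t, ((∑ k, g j k) - g j i - g j j))
        - ∑ i : Fin t, ((∑ k, g i k) - g i i - g i i) :=
    my_erase_sub (fun i j => (∑ k, g j k) - g j i - g j j)
  have h2 : ∑ j : Fin t, ∑ k ∈ univ.erase j, g j k
      = (∑ j : Fin t, ∑ k : Fin t, g j k) - ∑ j : Fin t, g j j :=
    my_erase_sub g
  rw [h1, h2]
  have h3 : ∑ i : Fin t, ∑ j : Fin t, g j i = ∑ j : Fin t, ∑ k : Fin t, g j k :=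
    Finset.sum_comm
  simp only [Finset.sum_sub_distrib, Finset.sum_const, Finset.card_univ, Fintype.card_fin,
    nsmul_eq_mul, h3]
  ring

lemma my_case3 {U : Type*} {t : ℕ} (ht3 : 3 ≤ t) (d : U → U → ℝ) (α : ℝ) (hα : 1 ≤ α)
    (hsymm : ∀ u v, d u v = d v u) (hself : ∀ u, d u u = 0)
    (htri : ∀ u v w, d u v ≤ α * (d v w + d w u)) (b c : Fin t → U) :
    ∑ i : Fin t, ∑ j : Fin t, d (c i) (c j)
      ≤ 2 * α * ((∑ i : Fin t, ∑ j : Fin t, d (b i) (c j)) - ∑ i : Fin t, d (b i) (c i)) := by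
  set W := ∑ i : Fin t, ∑ j : Fin t, d (b i) (c j) with hW
  set P := ∑ i : Fin t, d (b i) (c i) with hP
  have ht2r : (0:ℝ) < (t:ℝ) - 2 := by
    have : (3:ℝ) ≤ (t:ℝ) := by exact_mod_cast ht3
    linarith
  have hαpos : (0:ℝ) ≤ α := le_trans zero_le_one hα
  have hk : ((t:ℝ)-2) * (∑ i : Fin t, ∑ j : Fin t, d (c i) (c j))
      ≤ ((t:ℝ)-2) * (2*α*(W - P)) := by
    have hdiag : ∀ i : Fin t, ∑ j : Fin t, d (c i) (c j)
        = ∑ j ∈ univ.erase i, d (c i) (c j) := by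
      intro i
      exact (Finset.sum_erase (f := fun j => d (c i) (c j)) univ (hself (c i))).symm
    have step1 : ((t:ℝ)-2) * ∑ i : Fin t, ∑ j : Fin t, d (c i) (c j)
        = ∑ i : Fin t, ∑ j ∈ univ.erase i, (((t:ℝ)-2) * d (c i) (c j)) := by
      simp_rw [hdiag, Finset.mul_sum]
    have step2 : ∑ i : Fin t, ∑ j ∈ univ.erase i, (((t:ℝ)-2) * d (c i) (c j))
        ≤ ∑ i : Fin t, ∑ j ∈ univ.erase i,
            (α * ∑ k ∈ univ \ {i,j}, (d (c j) (b k) + d (b k) (c i))) := by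
      refine Finset.sum_le_sum fun i _ => Finset.sum_le_sum fun j hj => ?_
      have hij : i ≠ j := (Finset.ne_of_mem_erase hj).symm
      have hcard : (univ \ ({i,j} : Finset (Fin t))).card = t - 2 := by
        rw [Finset.card_sdiff_of_subset (Finset.subset_univ _), Finset.card_univ, Fintype.card_fin,
          Finset.card_pair hij]
      have hlhs : ((t:ℝ)-2) * d (c i) (c j)
          = ∑ _k ∈ univ \ ({i,j} : Finset (Fin t)), d (c i) (c j) := by
        rw [Finset.sum_const, hcard, nsmul_eq_mul]
        congr 1
        have h2t : (2:ℕ) ≤ t := le_trans (by norm_num) ht3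
        push_cast [Nat.cast_sub h2t]
        ring
      rw [hlhs, Finset.mul_sum]
      exact Finset.sum_le_sum fun k _ => htri (c i) (c j) (b k)
    have step3 : ∑ i : Fin t, ∑ j ∈ univ.erase i,
          (α * ∑ k ∈ univ \ {i,j}, (d (c j) (b k) + d (b k) (c i)))
        = α * ((∑ i : Fin t, ∑ j ∈ univ.erase i, ∑ k ∈ univ \ {i,j}, d (c j) (b k))
          + (∑ i : Fin t, ∑ j ∈ univ.erase i, ∑ k ∈ univ \ {i,j}, d (b k) (c i))) := by
      simp_rw [← Finset.mul_sum, Finset.sum_add_distrib]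
    have hterm1 : ∑ i : Fin t, ∑ j ∈ univ.erase i, ∑ k ∈ univ \ {i,j}, d (c j) (b k)
        = ((t:ℝ)-2) * (W - P) := by
      rw [my_eval (fun j k => d (c j) (b k))]
      congr 1
      rw [my_erase_sub (fun j k => d (c j) (b k))]
      have e1 : ∑ j : Fin t, ∑ k : Fin t, d (c j) (b k) = W := by
        rw [hW, Finset.sum_comm]
        exact Finset.sum_congr rfl fun k _ => Finset.sum_congr rfl fun j _ => hsymm _ _
      have e2 : ∑ j : Fin t, d (c j) (b j) = P := by
        rw [hP]
        exact Finset.sum_congr rfl fun j _ => hsymm _ _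
      rw [e1, e2]
    have hterm2 : ∑ i : Fin t, ∑ j ∈ univ.erase i, ∑ k ∈ univ \ {i,j}, d (b k) (c i)
        = ((t:ℝ)-2) * (W - P) := by
      have hsw : ∑ i : Fin t, ∑ j ∈ univ.erase i, ∑ k ∈ univ \ {i,j}, d (b k) (c i)
          = ∑ i : Fin t, ∑ j ∈ univ.erase i, ∑ k ∈ univ \ {j,i}, d (b k) (c j) :=
        my_swap (fun i j => ∑ k ∈ univ \ ({i,j} : Finset (Fin t)), d (b k) (c i))
      have hsw3 : ∑ i : Fin t, ∑ j ∈ univ.erase i, ∑ k ∈ univ \ {j,i}, d (b k) (c j)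
          = ∑ i : Fin t, ∑ j ∈ univ.erase i, ∑ k ∈ univ \ {i,j}, d (b k) (c j) :=
        Finset.sum_congr rfl fun i _ => Finset.sum_congr rfl fun j _ => by
          rw [Finset.pair_comm j i]
      rw [hsw, hsw3, my_eval (fun j k => d (b k) (c j))]
      congr 1
      rw [my_erase_sub (fun j k => d (b k) (c j))]
      have e1 : ∑ j : Fin t, ∑ k : Fin t, d (b k) (c j) = W := by
        rw [hW, Finset.sum_comm]
      rw [e1]
    calc ((t:ℝ)-2) * ∑ i : Fin t, ∑ j : Fin t, d (c i) (c j)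
        = ∑ i : Fin t, ∑ j ∈ univ.erase i, (((t:ℝ)-2) * d (c i) (c j)) := step1
      _ ≤ _ := step2
      _ = α * (((t:ℝ)-2) * (W - P) + ((t:ℝ)-2) * (W - P)) := by rw [step3, hterm1, hterm2]
      _ = ((t:ℝ)-2) * (2*α*(W - P)) := by ring
  exact le_of_mul_le_mul_left hk ht2r

lemma my_claim {U : Type*} [DecidableEq U] (d : U → U → ℝ) (α : ℝ) (hα : 1 ≤ α)
    (hnn : ∀ u v, 0 ≤ d u v) (hsymm : ∀ u v, d u v = d v u) (hself : ∀ u, d u u = 0)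
    (htri : ∀ u v w, d u v ≤ α * (d v w + d w u))
    (t : ℕ) (ht : 2 ≤ t) (b c : Fin t → U) (J : Finset U) (hJ : t = 2 → J.Nonempty) :
    (∑ i : Fin t, ∑ j : Fin t, d (c i) (c j)) / 2
        + α^2 * (∑ i : Fin t, d (b i) (c i))
      ≤ α^2 * (∑ i : Fin t, ∑ j : Fin t, d (b i) (c j))
        + α^2 * (∑ i : Fin t, ∑ v ∈ J, d (b i) v) := by
  have hα0 : (0:ℝ) ≤ α := le_trans zero_le_one hα
  have hα2 : (1:ℝ) ≤ α^2 := by nlinarith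
  have hXBJnn : (0:ℝ) ≤ ∑ i : Fin t, ∑ v ∈ J, d (b i) v :=
    Finset.sum_nonneg fun _ _ => Finset.sum_nonneg fun _ _ => hnn _ _
  have hP_le_W : (∑ i : Fin t, d (b i) (c i)) ≤ ∑ i : Fin t, ∑ j : Fin t, d (b i) (c j) :=
    Finset.sum_le_sum fun i _ =>
      Finset.single_le_sum (fun j _ => hnn (b i) (c j)) (Finset.mem_univ i)
  rcases eq_or_lt_of_le ht with h2 | h3
  · -- t = 2
    have h2' : t = 2 := h2.symm
    subst h2'
    obtain ⟨s, hs⟩ := hJ rfl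
    have h1 : d (c 0) (c 1) ≤ α * (d (c 1) s + d s (c 0)) := htri _ _ _
    have hh2 : d (c 1) s ≤ α * (d s (b 0) + d (b 0) (c 1)) := htri _ _ _
    have hh3 : d s (c 0) ≤ α * (d (c 0) (b 1) + d (b 1) s) := htri _ _ _
    have hch : d (c 0) (c 1)
        ≤ α^2 * (d s (b 0) + d (b 0) (c 1) + d (c 0) (b 1) + d (b 1) s) := by
      calc d (c 0) (c 1) ≤ α * (d (c 1) s + d s (c 0)) := h1
        _ ≤ α * (α * (d s (b 0) + d (b 0) (c 1)) + α * (d (c 0) (b 1) + d (b 1) s)) :=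
            mul_le_mul_of_nonneg_left (add_le_add hh2 hh3) hα0
        _ = α^2 * (d s (b 0) + d (b 0) (c 1) + d (c 0) (b 1) + d (b 1) s) := by ring
    rw [hsymm s (b 0), hsymm (c 0) (b 1)] at hch
    have h4 : ∀ x : U, d x s ≤ ∑ v ∈ J, d x v :=
      fun x => Finset.single_le_sum (fun v _ => hnn x v) hs
    have hXBJ2 : d (b 0) s + d (b 1) s ≤ ∑ i : Fin 2, ∑ v ∈ J, d (b i) v := by
      rw [Fin.sum_univ_two]
      exact add_le_add (h4 _) (h4 _)
    have hmul : α^2 * (d (b 0) s + d (b 1) s) ≤ α^2 * ∑ i : Fin 2, ∑ v ∈ J, d (b i) v :=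
      mul_le_mul_of_nonneg_left hXBJ2 (by positivity)
    have hDC : (∑ i : Fin 2, ∑ j : Fin 2, d (c i) (c j)) / 2 = d (c 0) (c 1) := by
      simp [Fin.sum_univ_two, hself, hsymm (c 1) (c 0)]
      try ring
    have hW : (∑ i : Fin 2, ∑ j : Fin 2, d (b i) (c j))
        = d (b 0) (c 0) + d (b 0) (c 1) + d (b 1) (c 0) + d (b 1) (c 1) := by
      simp [Fin.sum_univ_two]
      try ring
    have hP : (∑ i : Fin 2, d (b i) (c i)) = d (b 0) (c 0) + d (b 1) (c 1) := by
      simp [Fin.sum_univ_two]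
    rw [hDC, hW, hP]
    nlinarith [hch, hmul]
  · -- t ≥ 3
    have ht3 : 3 ≤ t := h3
    have hkey := my_case3 ht3 d α hα hsymm hself htri b c
    have hq1 : (0:ℝ) ≤ (α^2 - α) *
        ((∑ i : Fin t, ∑ j : Fin t, d (b i) (c j)) - ∑ i : Fin t, d (b i) (c i)) :=
      mul_nonneg (by nlinarith) (by linarith)
    have hq2 : (0:ℝ) ≤ α^2 * ∑ i : Fin t, ∑ v ∈ J, d (b i) v :=
      mul_nonneg (by positivity) hXBJnn
    nlinarith [hkey, hq1, hq2]

set_option maxHeartbeats 1000000 in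
theorem stmt8 {U : Type*} [DecidableEq U] (d : U → U → ℝ) (α : ℝ) (hα : 1 ≤ α)
    (hnn : ∀ u v, 0 ≤ d u v) (hsymm : ∀ u v, d u v = d v u)
    (hself : ∀ u, d u u = 0)
    (htri : ∀ u v w, d u v ≤ α * (d v w + d w u))
    (f : Finset U → ℝ) (hfnn : ∀ X, 0 ≤ f X)
    (hmono : ∀ X Y, X ⊆ Y → f X ≤ f Y)
    (hsub : ∀ X Y, f (X ∪ Y) + f (X ∩ Y) ≤ f X + f Y)
    (lam : ℝ) (hlam : 0 ≤ lam)
    (S O : Finset U) (hcard : S.card = O.card) (hcard3 : 3 ≤ S.card)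
    (t : ℕ) (ht : 2 ≤ t) (ht2 : t = 2 → (S ∩ O).Nonempty)
    (b c : Fin t → U)
    (hb : Function.Injective b) (hc : Function.Injective c)
    (hB : Finset.image b Finset.univ = S \ O)
    (hC : Finset.image c Finset.univ = O \ S)
    (hlocal : ∀ i, f S + lam * dSet d S
      ≥ f (insert (c i) (S.erase (b i))) + lam * dSet d (insert (c i) (S.erase (b i)))) :
    f S + lam * dSet d S ≥ (1 / (2 * α ^ 2)) * (f O + lam * dSet d O) := by
  have hα0 : (0:ℝ) ≤ α := le_trans zero_le_one hα
  have hαpos : (0:ℝ) < α := lt_of_lt_of_le zero_lt_one hα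
  have hα2 : (1:ℝ) ≤ α^2 := by nlinarith
  have hbS : ∀ i, b i ∈ S := by
    intro i
    have h := Finset.mem_image_of_mem b (Finset.mem_univ i)
    rw [hB] at h
    exact (Finset.mem_sdiff.mp h).1
  have hcS : ∀ i, c i ∉ S := by
    intro i
    have h := Finset.mem_image_of_mem c (Finset.mem_univ i)
    rw [hC] at h
    exact (Finset.mem_sdiff.mp h).2
  have hinjb : ∀ x ∈ (univ : Finset (Fin t)), ∀ y ∈ (univ : Finset (Fin t)),
      b x = b y → x = y := fun x _ y _ h => hb h
  have hinjc : ∀ x ∈ (univ : Finset (Fin t)), ∀ y ∈ (univ : Finset (Fin t)),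
      c x = c y → x = y := fun x _ y _ h => hc h
  -- sum conversions
  have hconv1 : dCross d (S \ O) S = ∑ i : Fin t, ∑ v ∈ S, d (b i) v := by
    rw [← hB]; exact Finset.sum_image hinjb
  have hconv2 : dCross d (O \ S) S = ∑ i : Fin t, ∑ v ∈ S, d (c i) v := by
    rw [← hC]; exact Finset.sum_image hinjc
  have hconvW : dCross d (S \ O) (O \ S) = ∑ i : Fin t, ∑ j : Fin t, d (b i) (c j) := by
    rw [← hB, ← hC]
    rw [show dCross d (Finset.image b univ) (Finset.image c univ)
      = ∑ u ∈ Finset.image b univ, ∑ v ∈ Finset.image c univ, d u v from rfl]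
    rw [Finset.sum_image hinjb]
    exact Finset.sum_congr rfl fun i _ => Finset.sum_image hinjc
  have hconvDC : dSet d (O \ S) = (∑ i : Fin t, ∑ j : Fin t, d (c i) (c j)) / 2 := by
    rw [← hC]
    rw [show dSet d (Finset.image c univ)
      = (∑ u ∈ Finset.image c univ, ∑ v ∈ Finset.image c univ, d u v) / 2 from rfl]
    congr 1
    rw [Finset.sum_image hinjc]
    exact Finset.sum_congr rfl fun i _ => Finset.sum_image hinjc
  have hconvJ : dCross d (S \ O) (S ∩ O) = ∑ i : Fin t, ∑ v ∈ S ∩ O, d (b i) v := by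
    rw [← hB]; exact Finset.sum_image hinjb
  have hCcard : (O \ S).card = t := by
    rw [← hC, Finset.card_image_of_injective _ hc, Finset.card_univ, Fintype.card_fin]
  have hBcard : (S \ O).card = t := by
    rw [← hB, Finset.card_image_of_injective _ hb, Finset.card_univ, Fintype.card_fin]
  have hconvA : ∑ x ∈ O \ S, f (insert x S) = ∑ i : Fin t, f (insert (c i) S) := by
    rw [← hC]; exact Finset.sum_image hinjc
  have hconvB : ∑ x ∈ S \ O, f (S.erase x) = ∑ i : Fin t, f (S.erase (b i)) := by
    rw [← hB]; exact Finset.sum_image hinjb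
  have hconvP : ∑ i : Fin t, d (c i) (b i) = ∑ i : Fin t, d (b i) (c i) :=
    Finset.sum_congr rfl fun i _ => hsymm _ _
  -- disjointness and unions
  have hdisjBJ : Disjoint (S \ O) (S ∩ O) := by
    rw [Finset.disjoint_left]
    intro x hx hx2
    exact (Finset.mem_sdiff.mp hx).2 (Finset.mem_inter.mp hx2).2
  have hdisjCJ : Disjoint (O \ S) (S ∩ O) := by
    rw [Finset.disjoint_left]
    intro x hx hx2
    exact (Finset.mem_sdiff.mp hx).2 (Finset.mem_inter.mp hx2).1
  have hSBJ : (S \ O) ∪ (S ∩ O) = S := Finset.sdiff_union_inter S O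
  have hOCJ : (O \ S) ∪ (S ∩ O) = O := by
    rw [Finset.inter_comm]; exact Finset.sdiff_union_inter O S
  -- decomposition identities
  have hdS : dSet d S = dSet d (S \ O) + dSet d (S ∩ O) + dCross d (S \ O) (S ∩ O) := by
    have h := my_dSet_union d hsymm (S \ O) (S ∩ O) hdisjBJ
    rw [hSBJ] at h; exact h
  have hdO : dSet d O = dSet d (O \ S) + dSet d (S ∩ O) + dCross d (O \ S) (S ∩ O) := by
    have h := my_dSet_union d hsymm (O \ S) (S ∩ O) hdisjCJ
    rw [hOCJ] at h; exact h
  have hBB : dCross d (S \ O) (S \ O) = 2 * dSet d (S \ O) := by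
    unfold dSet dCross; ring
  have hXBS : dCross d (S \ O) S = 2 * dSet d (S \ O) + dCross d (S \ O) (S ∩ O) := by
    have h := my_dCross_union_right d (S \ O) (S \ O) (S ∩ O) hdisjBJ
    rw [hSBJ, hBB] at h; exact h
  have hXCS : dCross d (O \ S) S
      = dCross d (S \ O) (O \ S) + dCross d (O \ S) (S ∩ O) := by
    have h := my_dCross_union_right d (O \ S) (S \ O) (S ∩ O) hdisjBJ
    rw [hSBJ, my_dCross_comm d hsymm (O \ S) (S \ O)] at h; exact h
  -- the per-swap inequality
  have hswap : ∀ i : Fin t, f (insert (c i) S)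
      ≤ 2 * f S - f (S.erase (b i))
        + lam * ((∑ v ∈ S, d (b i) v) - (∑ v ∈ S, d (c i) v) + d (c i) (b i)) := by
    intro i
    have h1 := hlocal i
    have h2 := my_dSet_swap d hsymm hself (b i) (c i) S (hbS i) (hcS i)
    have hu : insert (c i) (S.erase (b i)) ∪ S = insert (c i) S := by
      ext x
      simp only [Finset.mem_union, Finset.mem_insert, Finset.mem_erase]
      constructor
      · rintro ((h | ⟨_, h⟩) | h)
        · exact Or.inl h
        · exact Or.inr h
        · exact Or.inr h
      · rintro (h | h)
        · exact Or.inl (Or.inl h)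
        · exact Or.inr h
    have hi2 : insert (c i) (S.erase (b i)) ∩ S = S.erase (b i) := by
      ext x
      simp only [Finset.mem_inter, Finset.mem_insert, Finset.mem_erase]
      constructor
      · rintro ⟨h | h, hxS⟩
        · exact absurd (h ▸ hxS) (hcS i)
        · exact h
      · intro h
        exact ⟨Or.inr h, h.2⟩
    have h3 := hsub (insert (c i) (S.erase (b i))) S
    rw [hu, hi2] at h3
    have he : lam * dSet d (insert (c i) (S.erase (b i)))
        = lam * dSet d S - lam * (∑ v ∈ S, d (b i) v) + lam * (∑ v ∈ S, d (c i) v)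
          - lam * d (c i) (b i) := by rw [h2]; ring
    have hg : lam * ((∑ v ∈ S, d (b i) v) - (∑ v ∈ S, d (c i) v) + d (c i) (b i))
        = lam * (∑ v ∈ S, d (b i) v) - lam * (∑ v ∈ S, d (c i) v)
          + lam * d (c i) (b i) := by ring
    rw [hg]
    linarith [h1, h3, he]
  -- summed
  have hsum : ∑ i : Fin t, f (insert (c i) S)
      ≤ 2*(t:ℝ)*f S - (∑ i : Fin t, f (S.erase (b i)))
        + lam * (dCross d (S \ O) S - dCross d (O \ S) S
          + ∑ i : Fin t, d (b i) (c i)) := by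
    have h := Finset.sum_le_sum (fun i (_ : i ∈ (univ : Finset (Fin t))) => hswap i)
    have e : ∑ i : Fin t, (2 * f S - f (S.erase (b i))
          + lam * ((∑ v ∈ S, d (b i) v) - (∑ v ∈ S, d (c i) v) + d (c i) (b i)))
        = 2*(t:ℝ)*f S - (∑ i : Fin t, f (S.erase (b i)))
          + lam * ((∑ i : Fin t, ∑ v ∈ S, d (b i) v)
            - (∑ i : Fin t, ∑ v ∈ S, d (c i) v) + ∑ i : Fin t, d (c i) (b i)) := by
      simp only [Finset.sum_add_distrib, Finset.sum_sub_distrib, ← Finset.mul_sum,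
        Finset.sum_const, Finset.card_univ, Fintype.card_fin, nsmul_eq_mul]
      ring
    rw [e] at h
    rw [← hconv1, ← hconv2, hconvP] at h
    exact h
  -- submodular telescopes
  have hdisjCS : Disjoint (O \ S) S := Finset.sdiff_disjoint
  have htelA := my_telescopeA f hsub S (O \ S) hdisjCS
  rw [hCcard, hconvA] at htelA
  have htelB := my_telescopeB f hsub S (S \ O) Finset.sdiff_subset
  have hSB : S \ (S \ O) = S ∩ O := Finset.sdiff_sdiff_self_left S O
  rw [hBcard, hconvB, hSB] at htelB
  have hfO : f O ≤ f (S ∪ (O \ S)) := by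
    apply hmono
    intro x hx
    by_cases h : x ∈ S
    · exact Finset.mem_union_left _ h
    · exact Finset.mem_union_right _ (Finset.mem_sdiff.mpr ⟨hx, h⟩)
  have hfJ : 0 ≤ f (S ∩ O) := hfnn _
  have hstar : f O ≤ 2 * f S
      + lam * (dCross d (S \ O) S - dCross d (O \ S) S
        + ∑ i : Fin t, d (b i) (c i)) := by
    linarith [htelA, htelB, hsum, hfO, hfJ]
  -- distance claim
  have hclaimraw := my_claim d α hα hnn hsymm hself htri t ht b c (S ∩ O) ht2
  rw [← hconvDC, ← hconvW, ← hconvJ] at hclaimraw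
  -- distance side
  have hDJnn : 0 ≤ dSet d (S ∩ O) := my_dSet_nonneg d hnn _
  have hXCJnn : 0 ≤ dCross d (O \ S) (S ∩ O) := my_dCross_nonneg d hnn _ _
  have hXBJnn : 0 ≤ dCross d (S \ O) (S ∩ O) := my_dCross_nonneg d hnn _ _
  have hp1 : 0 ≤ (2*α^2 - 1) * dSet d (S ∩ O) := mul_nonneg (by nlinarith) hDJnn
  have hp2 : 0 ≤ (α^2 - 1) * dCross d (O \ S) (S ∩ O) := mul_nonneg (by nlinarith) hXCJnn
  have hp3 : 0 ≤ α^2 * dCross d (S \ O) (S ∩ O) := mul_nonneg (by positivity) hXBJnn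
  have hdSle : dSet d O + α^2 * (dCross d (S \ O) S + ∑ i : Fin t, d (b i) (c i))
      ≤ 2*α^2*dSet d S + α^2 * dCross d (O \ S) S := by
    rw [hdO, hdS, hXBS, hXCS]
    nlinarith [hclaimraw, hp1, hp2, hp3]
  -- combine
  have hm1 := mul_le_mul_of_nonneg_left hdSle hlam
  have hstar2 : lam * (dCross d (O \ S) S - dCross d (S \ O) S
      - ∑ i : Fin t, d (b i) (c i)) ≤ 2 * f S - f O := by nlinarith [hstar]
  have hm2 := mul_le_mul_of_nonneg_left hstar2 (by positivity : (0:ℝ) ≤ α^2)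
  have hq : 0 ≤ (α^2 - 1) * f O := mul_nonneg (by nlinarith) (hfnn O)
  have hfle : f O + lam * dSet d O ≤ 2*α^2*(f S + lam * dSet d S) := by
    nlinarith [hm1, hm2, hq]
  have hpos : (0:ℝ) < 2*α^2 := mul_pos two_pos (pow_pos hαpos 2)
  rw [ge_iff_le, one_div]
  calc (2*α^2)⁻¹ * (f O + lam * dSet d O)
      ≤ (2*α^2)⁻¹ * (2*α^2*(f S + lam * dSet d S)) :=
        mul_le_mul_of_nonneg_left hfle (inv_nonneg.mpr hpos.le)
    _ = f S + lam * dSet d S := by field_simp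
end

section
/- Let d be a symmetric function satisfying the α-relaxed triangle inequality with α ≥ 1, and let A and C be disjoint sets with |A| ≥ 1, |C| ≥ 2. Then α(|C|−1)·d(A,C) ≥ |A|·d(C) and α(|A|−1)·d(A,C) ≥ |C|·d(A) hold simultaneously, and consequently, if |A|+|C| = p, then (|A|+|C|−1)·α·d(A,C) ≥ |C|·d(A) + |A|·d(C). -/
open Finset

lemma auxpt {U : Type*} [DecidableEq U] (d : U → U → ℝ) (α : ℝ)
    (hsymm : ∀ u v, d u v = d v u)
    (hself : ∀ u, d u u = 0)
    (htri : ∀ u v w, d u v ≤ α * (d v w + d w u))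
    (X : Finset U) (a : U) :
    ∑ v ∈ X, ∑ w ∈ X, d v w ≤ α * (2 * ((X.card : ℝ) - 1)) * ∑ v ∈ X, d a v := by
  have h1 : ∑ v ∈ X, ∑ w ∈ X, d v w = ∑ v ∈ X, ∑ w ∈ X.erase v, d v w := by
    refine Finset.sum_congr rfl fun v hv => ?_
    rw [← Finset.add_sum_erase X _ hv, hself, zero_add]
  rw [h1]
  have h2 : ∑ v ∈ X, ∑ w ∈ X.erase v, d v w
      ≤ ∑ v ∈ X, ∑ w ∈ X.erase v, (α * (d w a + d a v)) := by
    refine Finset.sum_le_sum fun v hv => Finset.sum_le_sum fun w hw => ?_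
    exact htri v w a
  refine h2.trans_eq ?_
  have h3 : ∀ v ∈ X, ∑ w ∈ X.erase v, (α * (d w a + d a v))
      = α * ((∑ w ∈ X, d a w) - d a v + ((X.card : ℝ) - 1) * d a v) := by
    intro v hv
    rw [← Finset.mul_sum, Finset.sum_add_distrib, Finset.sum_const,
      Finset.card_erase_of_mem hv, nsmul_eq_mul]
    have hwa : ∑ w ∈ X.erase v, d w a = (∑ w ∈ X, d a w) - d a v := by
      have : ∑ w ∈ X.erase v, d w a = ∑ w ∈ X.erase v, d a w :=
        Finset.sum_congr rfl fun w _ => hsymm w a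
      rw [this, Finset.sum_erase_eq_sub hv]
    rw [hwa]
    have hc : ((X.card - 1 : ℕ) : ℝ) = (X.card : ℝ) - 1 := by
      have : 1 ≤ X.card := Finset.card_pos.mpr ⟨v, hv⟩
      push_cast [this]; ring
    rw [hc]
  rw [Finset.sum_congr rfl h3, ← Finset.mul_sum, Finset.sum_add_distrib,
    Finset.sum_sub_distrib, Finset.sum_const, ← Finset.mul_sum, nsmul_eq_mul]
  ring

theorem stmt9 {U : Type*} [DecidableEq U] (d : U → U → ℝ) (α : ℝ) (hα : 1 ≤ α)
    (hnn : ∀ u v, 0 ≤ d u v) (hsymm : ∀ u v, d u v = d v u)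
    (hself : ∀ u, d u u = 0)
    (htri : ∀ u v w, d u v ≤ α * (d v w + d w u))
    (A C : Finset U) (hAC : Disjoint A C)
    (hA : 1 ≤ A.card) (hC : 2 ≤ C.card) (p : ℕ) :
    (α * ((C.card : ℝ) - 1) * dCross d A C ≥ (A.card : ℝ) * dSet d C
      ∧ α * ((A.card : ℝ) - 1) * dCross d A C ≥ (C.card : ℝ) * dSet d A)
    ∧ (A.card + C.card = p →
        ((A.card : ℝ) + (C.card : ℝ) - 1) * α * dCross d A C
          ≥ (C.card : ℝ) * dSet d A + (A.card : ℝ) * dSet d C) := by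
  have h1 : α * ((C.card : ℝ) - 1) * dCross d A C ≥ (A.card : ℝ) * dSet d C := by
    have hsum : ∑ a ∈ A, (∑ v ∈ C, ∑ w ∈ C, d v w)
        ≤ ∑ a ∈ A, α * (2 * ((C.card : ℝ) - 1)) * ∑ v ∈ C, d a v :=
      Finset.sum_le_sum fun a _ => auxpt d α hsymm hself htri C a
    rw [Finset.sum_const, nsmul_eq_mul, ← Finset.mul_sum] at hsum
    unfold dSet dCross
    calc (A.card : ℝ) * ((∑ u ∈ C, ∑ v ∈ C, d u v) / 2)
        ≤ (α * (2 * ((C.card : ℝ) - 1)) * ∑ a ∈ A, ∑ v ∈ C, d a v) / 2 := by linarith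
      _ = α * ((C.card : ℝ) - 1) * ∑ u ∈ A, ∑ v ∈ C, d u v := by ring
  have h2 : α * ((A.card : ℝ) - 1) * dCross d A C ≥ (C.card : ℝ) * dSet d A := by
    have hsum : ∑ c ∈ C, (∑ v ∈ A, ∑ w ∈ A, d v w)
        ≤ ∑ c ∈ C, α * (2 * ((A.card : ℝ) - 1)) * ∑ v ∈ A, d c v :=
      Finset.sum_le_sum fun c _ => auxpt d α hsymm hself htri A c
    rw [Finset.sum_const, nsmul_eq_mul, ← Finset.mul_sum] at hsum
    have hcomm : ∑ c ∈ C, ∑ v ∈ A, d c v = ∑ u ∈ A, ∑ v ∈ C, d u v := by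
      rw [Finset.sum_comm]
      exact Finset.sum_congr rfl fun u _ => Finset.sum_congr rfl fun v _ => hsymm v u
    rw [hcomm] at hsum
    unfold dSet dCross
    calc (C.card : ℝ) * ((∑ u ∈ A, ∑ v ∈ A, d u v) / 2)
        ≤ (α * (2 * ((A.card : ℝ) - 1)) * ∑ u ∈ A, ∑ v ∈ C, d u v) / 2 := by linarith
      _ = α * ((A.card : ℝ) - 1) * ∑ u ∈ A, ∑ v ∈ C, d u v := by ring
  refine ⟨⟨h1, h2⟩, fun _ => ?_⟩
  have hX : 0 ≤ dCross d A C :=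
    Finset.sum_nonneg fun u _ => Finset.sum_nonneg fun v _ => hnn u v
  have hαX : 0 ≤ α * dCross d A C := mul_nonneg (by linarith) hX
  have key : ((A.card : ℝ) + (C.card : ℝ) - 1) * α * dCross d A C
      = α * ((C.card : ℝ) - 1) * dCross d A C
        + α * ((A.card : ℝ) - 1) * dCross d A C + α * dCross d A C := by ring
  rw [ge_iff_le, key]
  linarith
end

section
/- Let d be symmetric nonnegative with the α-relaxed triangle inequality (α ≥ 1). Let G_i and O be finite sets with |O| = p ≥ 2 and |G_i| = i ≤ p−1, A = O ∩ G_i, B = G_i \ A, C = O \ A with |C| ≥ 2. Then d(C, G_i) ≥ d(O)·(i·|C|)/(α·p·(p−1)), where d(C,G_i) = d(C,A) + d(C,B). -/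
open Finset

lemma keyLem {U : Type*} [DecidableEq U] (d : U → U → ℝ) (α : ℝ)
    (hsymm : ∀ u v, d u v = d v u)
    (hself : ∀ u, d u u = 0)
    (htri : ∀ u v w, d u v ≤ α * (d v w + d w u))
    (X Z : Finset U) :
    (Z.card : ℝ) * ∑ x ∈ X, ∑ y ∈ X, d x y
      ≤ 2 * α * ((X.card : ℝ) - 1) * ∑ x ∈ X, ∑ z ∈ Z, d x z := by
  set F : U → ℝ := fun x => ∑ z ∈ Z, d x z with hF
  have herase : ∀ x ∈ X, ∑ y ∈ X, d x y = ∑ y ∈ X.erase x, d x y := by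
    intro x hx
    rw [← Finset.add_sum_erase X _ hx, hself, zero_add]
  have hstep : ∀ x ∈ X, (Z.card : ℝ) * ∑ y ∈ X.erase x, d x y
      ≤ α * (((X.card : ℝ) - 1) * F x + ((∑ y ∈ X, F y) - F x)) := by
    intro x hx
    have hpt : ∀ y ∈ X.erase x, (Z.card : ℝ) * d x y ≤ α * (F x + F y) := by
      intro y _
      have h0 : (Z.card : ℝ) * d x y = ∑ z ∈ Z, d x y := by
        rw [Finset.sum_const, nsmul_eq_mul]
      rw [h0]
      calc ∑ z ∈ Z, d x y ≤ ∑ z ∈ Z, α * (d x z + d z y) := by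
            refine Finset.sum_le_sum fun z _ => ?_
            have h1 := htri y x z
            rw [hsymm y x] at h1
            linarith
        _ = α * (F x + F y) := by
            rw [← Finset.mul_sum, Finset.sum_add_distrib]
            congr 2
            refine Finset.sum_congr rfl fun z _ => (hsymm z y)
    calc (Z.card : ℝ) * ∑ y ∈ X.erase x, d x y
        = ∑ y ∈ X.erase x, (Z.card : ℝ) * d x y := by rw [Finset.mul_sum]
      _ ≤ ∑ y ∈ X.erase x, α * (F x + F y) := Finset.sum_le_sum hpt
      _ = α * (((X.erase x).card : ℝ) * F x + ∑ y ∈ X.erase x, F y) := by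
            rw [← Finset.mul_sum, Finset.sum_add_distrib, Finset.sum_const, nsmul_eq_mul]
      _ = α * (((X.card : ℝ) - 1) * F x + ((∑ y ∈ X, F y) - F x)) := by
            rw [Finset.card_erase_of_mem hx, Finset.sum_erase_eq_sub hx]
            have h1 : 1 ≤ X.card := Finset.card_pos.2 ⟨x, hx⟩
            congr 2
            push_cast [Nat.cast_sub h1]
            ring
  calc (Z.card : ℝ) * ∑ x ∈ X, ∑ y ∈ X, d x y
      = ∑ x ∈ X, (Z.card : ℝ) * ∑ y ∈ X.erase x, d x y := by
        rw [Finset.mul_sum]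
        exact Finset.sum_congr rfl fun x hx => by rw [herase x hx]
    _ ≤ ∑ x ∈ X, α * (((X.card : ℝ) - 1) * F x + ((∑ y ∈ X, F y) - F x)) :=
        Finset.sum_le_sum hstep
    _ = α * (((X.card : ℝ) - 1) * (∑ y ∈ X, F y)
          + ((X.card : ℝ) * (∑ y ∈ X, F y) - (∑ y ∈ X, F y))) := by
        rw [← Finset.mul_sum]
        congr 1
        rw [Finset.sum_add_distrib, ← Finset.mul_sum, Finset.sum_sub_distrib,
          Finset.sum_const, nsmul_eq_mul]
    _ = 2 * α * ((X.card : ℝ) - 1) * ∑ x ∈ X, ∑ z ∈ Z, d x z := by ring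

set_option maxHeartbeats 1000000 in
theorem stmt10 {U : Type*} [DecidableEq U] (d : U → U → ℝ) (α : ℝ) (hα : 1 ≤ α)
    (hnn : ∀ u v, 0 ≤ d u v) (hsymm : ∀ u v, d u v = d v u)
    (hself : ∀ u, d u u = 0)
    (htri : ∀ u v w, d u v ≤ α * (d v w + d w u))
    (Gi O : Finset U) (p i : ℕ)
    (hp : O.card = p) (hp2 : 2 ≤ p) (hi : Gi.card = i) (hip : i < p)
    (hC : 2 ≤ (O \ Gi).card) :
    dCross d (O \ Gi) Gi
      ≥ dSet d O * ((i : ℝ) * ((O \ Gi).card : ℝ)) / (α * (p : ℝ) * ((p : ℝ) - 1)) := by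
  classical
  have hα0 : (0:ℝ) < α := lt_of_lt_of_le one_pos hα
  set A := O ∩ Gi with hAdef
  set B := Gi \ O with hBdef
  set C := O \ Gi with hCdef
  -- disjointness and unions
  have hdAB : Disjoint A B :=
    Finset.disjoint_of_subset_left Finset.inter_subset_left Finset.disjoint_sdiff
  have hdAC : Disjoint A C :=
    Finset.disjoint_of_subset_left Finset.inter_subset_right Finset.disjoint_sdiff
  have hGiU : A ∪ B = Gi := by
    rw [hAdef, hBdef]
    ext z; simp only [Finset.mem_union, Finset.mem_inter, Finset.mem_sdiff]; tauto
  have hOU : A ∪ C = O := by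
    rw [hAdef, hCdef]
    ext z; simp only [Finset.mem_union, Finset.mem_inter, Finset.mem_sdiff]; tauto
  -- real abbreviations
  have haR : (0:ℝ) ≤ (A.card : ℝ) := Nat.cast_nonneg _
  set aR := (A.card : ℝ)
  set bR := (B.card : ℝ)
  set cR := (C.card : ℝ)
  set q2 := ∑ x ∈ A, ∑ y ∈ A, d x y with hq2
  set t2 := ∑ x ∈ C, ∑ y ∈ C, d x y with ht2
  set s := ∑ x ∈ C, ∑ y ∈ A, d x y with hs
  set u := ∑ x ∈ C, ∑ y ∈ B, d x y with hu
  have hsnn : 0 ≤ s := Finset.sum_nonneg fun x _ => Finset.sum_nonneg fun y _ => hnn x y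
  have hunn : 0 ≤ u := Finset.sum_nonneg fun x _ => Finset.sum_nonneg fun y _ => hnn x y
  -- cardinalities
  have hcard1 : A.card + C.card = p := by
    rw [hAdef, hCdef, ← hp]; exact Finset.card_inter_add_card_sdiff O Gi
  have hcard2 : A.card + B.card = i := by
    rw [hAdef, hBdef, Finset.inter_comm, ← hi]; exact Finset.card_inter_add_card_sdiff Gi O
  have hpR : (p : ℝ) = aR + cR := by
    show (p : ℝ) = (A.card : ℝ) + (C.card : ℝ)
    exact_mod_cast hcard1.symm
  have hiR : (i : ℝ) = aR + bR := by
    show (i : ℝ) = (A.card : ℝ) + (B.card : ℝ)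
    exact_mod_cast hcard2.symm
  have hbc : bR < cR := by
    have hn : B.card < C.card := by omega
    show (B.card : ℝ) < (C.card : ℝ)
    exact_mod_cast hn
  have hc2 : (2:ℝ) ≤ cR := by
    show (2:ℝ) ≤ (C.card : ℝ)
    exact_mod_cast hC
  have ha0 : (0:ℝ) ≤ aR := Nat.cast_nonneg _
  have hb0 : (0:ℝ) ≤ bR := Nat.cast_nonneg _
  -- key inequalities
  have hACeq : ∑ x ∈ A, ∑ y ∈ C, d x y = s := by
    rw [Finset.sum_comm]
    exact Finset.sum_congr rfl fun x _ => Finset.sum_congr rfl fun y _ => hsymm y x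
  have h1 : cR * q2 ≤ 2 * α * (aR - 1) * s := by
    have := keyLem d α hsymm hself htri A C
    rwa [hACeq] at this
  have h2 : aR * t2 ≤ 2 * α * (cR - 1) * s := keyLem d α hsymm hself htri C A
  have h3 : bR * t2 ≤ 2 * α * (cR - 1) * u := keyLem d α hsymm hself htri C B
  -- sum splits
  have hcross : dCross d C Gi = s + u := by
    rw [dCross, ← hGiU]
    rw [show (∑ x ∈ C, ∑ v ∈ A ∪ B, d x v) = ∑ x ∈ C, ((∑ v ∈ A, d x v) + ∑ v ∈ B, d x v) from
      Finset.sum_congr rfl fun x _ => Finset.sum_union hdAB]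
    rw [Finset.sum_add_distrib]
  have hdset : dSet d O = (q2 + s + s + t2) / 2 := by
    rw [dSet, ← hOU, Finset.sum_union hdAC]
    rw [show (∑ x ∈ A, ∑ v ∈ A ∪ C, d x v) = ∑ x ∈ A, ((∑ v ∈ A, d x v) + ∑ v ∈ C, d x v) from
      Finset.sum_congr rfl fun x _ => Finset.sum_union hdAC]
    rw [show (∑ x ∈ C, ∑ v ∈ A ∪ C, d x v) = ∑ x ∈ C, ((∑ v ∈ A, d x v) + ∑ v ∈ C, d x v) from
      Finset.sum_congr rfl fun x _ => Finset.sum_union hdAC]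
    rw [Finset.sum_add_distrib, Finset.sum_add_distrib, hACeq]
    ring_nf
    rw [hq2, hs, ht2]; ring
  -- reduce to polynomial inequality
  have hD : (0:ℝ) < α * (p : ℝ) * ((p : ℝ) - 1) := by
    have h2p : (2:ℝ) ≤ (p:ℝ) := by exact_mod_cast hp2
    have : (0:ℝ) < (p:ℝ) := by linarith
    have : (0:ℝ) < (p:ℝ) - 1 := by linarith
    positivity
  rw [ge_iff_le, div_le_iff₀ hD, hcross, hdset, hiR, hpR]
  -- final polynomial inequality
  have E1 : (aR + bR) * (cR * q2) ≤ (aR + bR) * (2 * α * (aR - 1) * s) :=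
    mul_le_mul_of_nonneg_left h1 (by linarith)
  have E2 : (cR - bR) * (aR * t2) ≤ (cR - bR) * (2 * α * (cR - 1) * s) :=
    mul_le_mul_of_nonneg_left h2 (by linarith)
  have E3 : (aR + cR) * (bR * t2) ≤ (aR + cR) * (2 * α * (cR - 1) * u) :=
    mul_le_mul_of_nonneg_left h3 (by linarith)
  have E4 : (aR + bR) * cR * s ≤ α * ((aR + bR) * cR * s) := by
    nlinarith [mul_nonneg (mul_nonneg (by linarith : (0:ℝ) ≤ aR + bR) (by linarith : (0:ℝ) ≤ cR)) hsnn]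
  have F1 : (0:ℝ) ≤ α * ((cR - bR) * (aR * s)) := by
    apply mul_nonneg (le_of_lt hα0)
    exact mul_nonneg (by linarith) (mul_nonneg ha0 hsnn)
  have F2 : (0:ℝ) ≤ α * ((aR + cR) * (aR * u)) := by
    apply mul_nonneg (le_of_lt hα0)
    exact mul_nonneg (by linarith) (mul_nonneg ha0 hunn)
  nlinarith [E1, E2, E3, E4, F1, F2]
end

section
/- Single-swap optimality transfer: let f be monotone submodular, d symmetric nonnegative, λ ≥ 0, φ(X) = f(X) + λd(X), φ'(X) = (1/2)f(X) + λd(X), and marginal gains φ_u(S) = φ(S∪{u}) − φ(S), φ'_u(S) = φ'(S∪{u}) − φ'(S). If u ∉ S maximizes φ'_·(S), i.e., φ'_u(S) ≥ φ'_v(S) for all v ∉ S, then φ_u(S) ≥ (1/2)·φ_v(S) for all v ∉ S. -/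
open Finset

theorem stmt14 {U : Type*} [DecidableEq U]
    (d : U → U → ℝ) (hnn : ∀ u v, 0 ≤ d u v) (hsymm : ∀ u v, d u v = d v u)
    (hself : ∀ u, d u u = 0)
    (f : Finset U → ℝ) (hfnn : ∀ X, 0 ≤ f X)
    (hmono : ∀ X Y, X ⊆ Y → f X ≤ f Y)
    (hsub : ∀ X Y, f (X ∪ Y) + f (X ∩ Y) ≤ f X + f Y)
    (lam : ℝ) (hlam : 0 ≤ lam)
    (S : Finset U) (u : U) (hu : u ∉ S)
    (hmax : ∀ v ∉ S,
      ((1 / 2) * f (insert u S) + lam * dSet d (insert u S))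
          - ((1 / 2) * f S + lam * dSet d S)
        ≥ ((1 / 2) * f (insert v S) + lam * dSet d (insert v S))
          - ((1 / 2) * f S + lam * dSet d S)) :
    ∀ v ∉ S,
      (f (insert u S) + lam * dSet d (insert u S)) - (f S + lam * dSet d S)
        ≥ (1 / 2) * ((f (insert v S) + lam * dSet d (insert v S)) - (f S + lam * dSet d S)) := by

  intro v hv
  have hdmono : ∀ (w : U), dSet d S ≤ dSet d (insert w S) := by
    intro w
    unfold dSet
    have h1 : (∑ a ∈ S, ∑ b ∈ S, d a b) ≤ ∑ a ∈ insert w S, ∑ b ∈ insert w S, d a b :=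
      le_trans
        (Finset.sum_le_sum (fun i _ =>
          Finset.sum_le_sum_of_subset_of_nonneg (Finset.subset_insert w S)
            (fun j _ _ => hnn i j)))
        (Finset.sum_le_sum_of_subset_of_nonneg (Finset.subset_insert w S)
          (fun i _ _ => Finset.sum_nonneg (fun j _ => hnn i j)))
    linarith
  have hfu : f S ≤ f (insert u S) := hmono _ _ (Finset.subset_insert u S)
  have h := hmax v hv
  have hdu := hdmono u
  have hdv := hdmono v
  have hlamdv : 0 ≤ lam * (dSet d (insert v S) - dSet d S) :=
    mul_nonneg hlam (by linarith)
  nlinarith [mul_nonneg hlam (sub_nonneg.2 hdu)]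
end

section
/- Combining local optimality with the distance and submodular swap lemmas: if for all i ∈ {1,…,t}, f(S) + λd(S) ≥ f(S−b_i+c_i) + λd(S−b_i+c_i), and Σ_i f(S−b_i+c_i) ≥ (t−2)f(S) + f(O), and Σ_i d(S−b_i+c_i) ≥ (t−2)d(S) + (1/α²)d(O), then 2f(S) + 2λd(S) ≥ f(O) + (λ/α²)d(O), and hence f(S) + λd(S) ≥ (1/(2α²))(f(O) + λd(O)) when α ≥ 1 and f, d, λ are nonnegative. -/
open Finset

lemma dSet_nonneg' {U : Type*} (d : U → U → ℝ) (hnn : ∀ u v, 0 ≤ d u v)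
    (X : Finset U) : 0 ≤ dSet d X := by
  unfold dSet
  apply div_nonneg _ (by norm_num)
  exact Finset.sum_nonneg fun u _ => Finset.sum_nonneg fun v _ => hnn u v

theorem stmt19 {U : Type*} [DecidableEq U]
    (d : U → U → ℝ) (hnn : ∀ u v, 0 ≤ d u v)
    (f : Finset U → ℝ) (hfnn : ∀ X, 0 ≤ f X)
    (lam α : ℝ) (hlam : 0 ≤ lam) (hα : 1 ≤ α)
    (S O : Finset U) (t : ℕ) (b c : Fin t → U)
    (hbS : ∀ i, b i ∈ S) (hcS : ∀ i, c i ∉ S)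
    (hlocal : ∀ i, f S + lam * dSet d S
      ≥ f (insert (c i) (S.erase (b i))) + lam * dSet d (insert (c i) (S.erase (b i))))
    (hf : ∑ i, f (insert (c i) (S.erase (b i))) ≥ ((t : ℝ) - 2) * f S + f O)
    (hd : ∑ i, dSet d (insert (c i) (S.erase (b i)))
      ≥ ((t : ℝ) - 2) * dSet d S + (1 / α ^ 2) * dSet d O) :
    2 * f S + 2 * lam * dSet d S ≥ f O + (lam / α ^ 2) * dSet d O
    ∧ f S + lam * dSet d S ≥ (1 / (2 * α ^ 2)) * (f O + lam * dSet d O) := by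
  have hsum : ∑ i : Fin t, (f (insert (c i) (S.erase (b i)))
      + lam * dSet d (insert (c i) (S.erase (b i))))
      ≤ (t : ℝ) * (f S + lam * dSet d S) := by
    calc ∑ i : Fin t, (f (insert (c i) (S.erase (b i)))
        + lam * dSet d (insert (c i) (S.erase (b i))))
        ≤ ∑ _i : Fin t, (f S + lam * dSet d S) :=
          Finset.sum_le_sum fun i _ => hlocal i
      _ = (t : ℝ) * (f S + lam * dSet d S) := by
          rw [Finset.sum_const, Finset.card_univ, Fintype.card_fin, nsmul_eq_mul]
  rw [Finset.sum_add_distrib, ← Finset.mul_sum] at hsum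
  have hα2 : (1:ℝ) ≤ α ^ 2 := by nlinarith
  have hα2pos : (0:ℝ) < α ^ 2 := by positivity
  have hdO : 0 ≤ dSet d O := dSet_nonneg' d hnn O
  have hfO : 0 ≤ f O := hfnn O
  have hlamd : lam * dSet d O ≥ 0 := mul_nonneg hlam hdO
  have h1 : 2 * f S + 2 * lam * dSet d S ≥ f O + (lam / α ^ 2) * dSet d O := by
    have h2 := mul_le_mul_of_nonneg_left hd hlam
    have hw : (lam / α ^ 2) * dSet d O = lam * (1 / α ^ 2 * dSet d O) := by ring
    rw [ge_iff_le, hw]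
    nlinarith [hsum, hf, h2]
  refine ⟨h1, ?_⟩
  rw [ge_iff_le, div_mul_eq_mul_div, div_le_iff₀ (by positivity), one_mul]
  have : (lam / α ^ 2) * dSet d O * α ^ 2 = lam * dSet d O := by
    field_simp
  nlinarith [h1, mul_le_mul_of_nonneg_right hα2 hfO,
    mul_le_mul_of_nonneg_right hα2 (mul_nonneg hlam hdO)]
end
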